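/- arXiv:math/9601206 — 5 statements merged into one kernel-verified Lean document; each statement's English description precedes it below -/
import Mathlib

section
/- Let H be a complex Hilbert space, A a bounded self-adjoint operator on H, φ ∈ H, λ ∈ ℝ, and let A_λ = A + λ⟨·, φ⟩φ (i.e. A_λψ = Aψ + λ⟨ψ, φ⟩φ). Then for every z ∈ ℂ with Im z > 0, the operators A − z and A_λ − z are boundedly invertible, 1 + λ⟨(A − z)⁻¹φ, φ⟩ ≠ 0, and ⟨(A_λ − z)⁻¹φ, φ⟩ = ⟨(A − z)⁻¹φ, φ⟩ / (1 + λ⟨(A − z)⁻¹φ, φ⟩). -/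
/-- The rank one perturbation `A_λ = A + λ⟨·, φ⟩φ`, i.e. `A_λ ψ = A ψ + λ ⟨ψ, φ⟩ φ`
(here `⟨ψ, φ⟩` is linear in `ψ`; in Mathlib's convention this is `⟪φ, ψ⟫_ℂ`). -/
noncomputable def rankOnePerturb {H : Type*} [NormedAddCommGroup H] [InnerProductSpace ℂ H]
    (A : H →L[ℂ] H) (lam : ℝ) (φ : H) : H →L[ℂ] H :=
  A + (lam : ℂ) • ((innerSL ℂ φ).smulRight φ)

theorem rankOnePerturb_selfAdjoint {H : Type*} [NormedAddCommGroup H] [InnerProductSpace ℂ H]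
    [CompleteSpace H]
    (A : H →L[ℂ] H) (hA : IsSelfAdjoint A) (φ : H) (lam : ℝ) :
    IsSelfAdjoint (rankOnePerturb A lam φ) := by
  rw [ContinuousLinearMap.isSelfAdjoint_iff_isSymmetric] at hA ⊢
  intro x y
  simp only [rankOnePerturb, ContinuousLinearMap.coe_coe, ContinuousLinearMap.add_apply,
    ContinuousLinearMap.smul_apply, ContinuousLinearMap.smulRight_apply, innerSL_apply_apply,
    inner_add_left, inner_add_right, inner_smul_left, inner_smul_right]
  congr 1
  · exact hA x y
  · rw [Complex.conj_ofReal, ← inner_conj_symm x φ]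
    ring

/-- For a bounded self-adjoint operator `A`, `φ ∈ H`, `λ ∈ ℝ` and `z` in the upper half
plane, `A - z` and `A_λ - z` are boundedly invertible, `1 + λ⟨(A−z)⁻¹φ, φ⟩ ≠ 0`, and
`⟨(A_λ−z)⁻¹φ, φ⟩ = ⟨(A−z)⁻¹φ, φ⟩ / (1 + λ⟨(A−z)⁻¹φ, φ⟩)`. -/
theorem stmt0 {H : Type*} [NormedAddCommGroup H] [InnerProductSpace ℂ H] [CompleteSpace H]
    (A : H →L[ℂ] H) (hA : IsSelfAdjoint A) (φ : H) (lam : ℝ) (z : ℂ) (hz : 0 < z.im) :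
    IsUnit (A - z • (1 : H →L[ℂ] H)) ∧
    IsUnit (rankOnePerturb A lam φ - z • (1 : H →L[ℂ] H)) ∧
    (1 : ℂ) + (lam : ℂ) * (inner ℂ φ (Ring.inverse (A - z • (1 : H →L[ℂ] H)) φ) : ℂ) ≠ 0 ∧
    (inner ℂ φ (Ring.inverse (rankOnePerturb A lam φ - z • (1 : H →L[ℂ] H)) φ) : ℂ) =
      (inner ℂ φ (Ring.inverse (A - z • (1 : H →L[ℂ] H)) φ) : ℂ) /
        ((1 : ℂ) + (lam : ℂ) * (inner ℂ φ (Ring.inverse (A - z • (1 : H →L[ℂ] H)) φ) : ℂ)) := by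
  have unit_of : ∀ (T : H →L[ℂ] H), IsSelfAdjoint T → IsUnit (T - z • (1 : H →L[ℂ] H)) := by
    intro T hT
    have h : z ∉ spectrum ℂ T := fun hmem => by
      simp [hT.im_eq_zero_of_mem_spectrum hmem] at hz
    rw [spectrum.notMem_iff] at h
    simpa [Algebra.algebraMap_eq_smul_one] using h.neg
  have hUA := unit_of A hA
  have hUB := unit_of _ (rankOnePerturb_selfAdjoint A hA φ lam)
  set R : H →L[ℂ] H := Ring.inverse (A - z • (1 : H →L[ℂ] H)) with hR
  set S : H →L[ℂ] H := Ring.inverse (rankOnePerturb A lam φ - z • (1 : H →L[ℂ] H)) with hS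
  set u : H := S φ with hu
  -- `(A_λ - z) u = φ`
  have hBu : (rankOnePerturb A lam φ - z • (1 : H →L[ℂ] H)) u = φ := by
    have h := Ring.mul_inverse_cancel _ hUB
    calc (rankOnePerturb A lam φ - z • (1 : H →L[ℂ] H)) u
        = ((rankOnePerturb A lam φ - z • (1 : H →L[ℂ] H)) * S) φ := rfl
      _ = (1 : H →L[ℂ] H) φ := by rw [h]
      _ = φ := rfl
  -- hence `(A - z) u = φ - λ⟪φ,u⟫ φ`
  have hAu : (A - z • (1 : H →L[ℂ] H)) u = φ - ((lam : ℂ) * (inner ℂ φ u : ℂ)) • φ := by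
    have : (rankOnePerturb A lam φ - z • (1 : H →L[ℂ] H)) u
        = (A - z • (1 : H →L[ℂ] H)) u + ((lam : ℂ) * (inner ℂ φ u : ℂ)) • φ := by
      simp only [rankOnePerturb, ContinuousLinearMap.sub_apply, ContinuousLinearMap.add_apply,
        ContinuousLinearMap.smul_apply, ContinuousLinearMap.smulRight_apply, innerSL_apply_apply,
        smul_smul]
      abel
    rw [this] at hBu
    rw [eq_sub_iff_add_eq, hBu]
  -- apply `R` on both sides: `u = Rφ - λ⟪φ,u⟫ Rφ`
  have hRA : ∀ x : H, R ((A - z • (1 : H →L[ℂ] H)) x) = x := by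
    intro x
    have h := Ring.inverse_mul_cancel _ hUA
    calc R ((A - z • (1 : H →L[ℂ] H)) x)
        = (R * (A - z • (1 : H →L[ℂ] H))) x := rfl
      _ = (1 : H →L[ℂ] H) x := by rw [h]
      _ = x := rfl
  have hukey : u = R φ - ((lam : ℂ) * (inner ℂ φ u : ℂ)) • R φ := by
    have h := hRA u
    rw [hAu, map_sub, map_smul] at h
    exact h.symm
  -- take inner product with φ
  set a : ℂ := (inner ℂ φ u : ℂ) with ha
  set b : ℂ := (inner ℂ φ (R φ) : ℂ) with hb
  have key : a = b - (lam : ℂ) * a * b := by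
    conv_lhs => rw [ha, hukey]
    rw [inner_sub_right, inner_smul_right, ← hb]
  have hden : (1 : ℂ) + (lam : ℂ) * b ≠ 0 := by
    intro h0
    have hb0 : b = 0 := by
      have : a * ((1 : ℂ) + (lam : ℂ) * b) = b := by linear_combination key
      rw [h0, mul_zero] at this
      exact this.symm
    rw [hb0, mul_zero, add_zero] at h0
    exact one_ne_zero h0
  refine ⟨hUA, hUB, hden, ?_⟩
  show a = b / ((1 : ℂ) + (lam : ℂ) * b)
  rw [eq_div_iff hden]
  linear_combination key
end

section
/- Let u be the phase shift of the pair (μ, ν) of finite positive compactly supported Borel measures on ℝ. Then for μˢ-almost every x ∈ ℝ one has lim_{ε→0⁺} ∫_{{|t| ≥ ε}} u(x + t)/t dt = +∞, and for νˢ-almost every x ∈ ℝ one has lim_{ε→0⁺} ∫_{{|t| ≥ ε}} u(x + t)/t dt = −∞, where μˢ and νˢ denote the singular parts of μ and ν with respect to Lebesgue measure. -/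
open MeasureTheory Set Filter

/-- The Cauchy transform `𝒦μ(z) = (1/π) ∫ (t - z)⁻¹ dμ(t)` of a positive measure on `ℝ`. -/
noncomputable def cauchyTransform (μ : Measure ℝ) (z : ℂ) : ℂ :=
  (Real.pi : ℂ)⁻¹ * ∫ t, ((t : ℂ) - z)⁻¹ ∂μ

/-- The Cauchy transform of the measure `u(t) dt` for a function `u : ℝ → ℝ`. -/
noncomputable def cauchyTransformFn (u : ℝ → ℝ) (z : ℂ) : ℂ :=
  (Real.pi : ℂ)⁻¹ * ∫ t, (u t : ℂ) * ((t : ℂ) - z)⁻¹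

/-- `u : ℝ → [0, π]` measurable with compact support is the phase shift of the pair
`(μ, ν)` if `1 + π𝒦μ(z) = exp(𝒦u(z)) = (1 − π𝒦ν(z))⁻¹` for all `z ∈ ℂ₊`. -/
def IsPhaseShift (u : ℝ → ℝ) (μ ν : Measure ℝ) : Prop :=
  Measurable u ∧ (∀ x, u x ∈ Icc (0 : ℝ) Real.pi) ∧ HasCompactSupport u ∧
    ∀ z : ℂ, 0 < z.im →
      1 + (Real.pi : ℂ) * cauchyTransform μ z = Complex.exp (cauchyTransformFn u z) ∧
      Complex.exp (cauchyTransformFn u z) = (1 - (Real.pi : ℂ) * cauchyTransform ν z)⁻¹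

namespace PhaseShiftAux

open Metric

lemma poisson_int {ε : ℝ} (hε : 0 < ε) : ∫ t : ℝ, ε / (t^2 + ε^2) = Real.pi := by
  have h0 : ∀ t : ℝ, ε / (t^2 + ε^2) = ε⁻¹ * (1 + (t/ε)^2)⁻¹ := by
    intro t; rw [div_pow]; field_simp; ring
  simp_rw [h0]
  rw [integral_const_mul, MeasureTheory.Measure.integral_comp_div (fun y : ℝ => (1 + y^2)⁻¹) ε,
    integral_univ_inv_one_add_sq, smul_eq_mul, abs_of_pos hε]
  field_simp

lemma poisson_integrable {ε : ℝ} (hε : 0 < ε) : Integrable (fun t : ℝ => ε / (t^2 + ε^2)) := by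
  have h0 : ∀ t : ℝ, ε / (t^2 + ε^2) = ε⁻¹ * (1 + (t/ε)^2)⁻¹ := by
    intro t; rw [div_pow]; field_simp; ring
  simp_rw [h0]
  exact (integrable_inv_one_add_sq.comp_div hε.ne').const_mul _

lemma measS (ε : ℝ) : MeasurableSet {t : ℝ | ε ≤ |t|} :=
  measurableSet_le measurable_const _root_.measurable_abs

lemma indicator_int (c r : ℝ) :
    Integrable ((Icc (-r) r).indicator (fun _ : ℝ => c)) := by
  rw [integrable_indicator_iff measurableSet_Icc]
  exact integrableOn_const (by simp [Real.volume_Icc])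

lemma truncInt (v : ℝ → ℝ) (hvm : Measurable v) (hb : ∀ s, |v s| ≤ Real.pi) (r : ℝ)
    (hsupp : ∀ s, s ∉ Icc (-r) r → v s = 0) (ε : ℝ) (hε : 0 < ε) :
    Integrable ({t : ℝ | ε ≤ |t|}.indicator (fun t => v t / t)) := by
  have hπ := Real.pi_pos
  refine Integrable.mono' (indicator_int (Real.pi / ε) r) ?_ ?_
  · exact ((hvm.div measurable_id).indicator (measS ε)).aestronglyMeasurable
  · refine Eventually.of_forall fun t => ?_
    by_cases htr : t ∈ Icc (-r) r
    · by_cases htS : t ∈ {t : ℝ | ε ≤ |t|}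
      · rw [indicator_of_mem htS, indicator_of_mem htr, Real.norm_eq_abs, abs_div]
        have h1 : ε ≤ |t| := htS
        have ht0 : (0:ℝ) < |t| := lt_of_lt_of_le hε h1
        rw [div_le_div_iff₀ ht0 hε]
        calc |v t| * ε ≤ Real.pi * ε := by nlinarith [hb t]
          _ ≤ Real.pi * |t| := by nlinarith
      · rw [indicator_of_notMem htS, indicator_of_mem htr]
        simp; positivity
    · rw [indicator_of_notMem htr]
      by_cases htS : t ∈ {t : ℝ | ε ≤ |t|}
      · rw [indicator_of_mem htS, hsupp t htr]; simp
      · rw [indicator_of_notMem htS]; simp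

lemma f2Int (v : ℝ → ℝ) (hvm : Measurable v) (hb : ∀ s, |v s| ≤ Real.pi) (r : ℝ)
    (hsupp : ∀ s, s ∉ Icc (-r) r → v s = 0) (ε : ℝ) (hε : 0 < ε) :
    Integrable (fun t => v t * (t / (t^2 + ε^2))) := by
  have hπ := Real.pi_pos
  refine Integrable.mono' (indicator_int (Real.pi / (2*ε)) r) ?_ ?_
  · apply AEStronglyMeasurable.mul hvm.aestronglyMeasurable
    apply Continuous.aestronglyMeasurable; fun_prop (disch := intros; positivity)
  · refine Eventually.of_forall fun t => ?_
    by_cases htr : t ∈ Icc (-r) r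
    · rw [indicator_of_mem htr, Real.norm_eq_abs, abs_mul, abs_div,
        abs_of_pos (show (0:ℝ) < t^2+ε^2 by positivity)]
      have hk : |t| / (t^2+ε^2) ≤ 1/(2*ε) := by
        rw [div_le_div_iff₀ (by positivity) (by positivity)]
        nlinarith [sq_abs t, sq_nonneg (|t| - ε)]
      calc |v t| * (|t| / (t^2+ε^2)) ≤ Real.pi * (1/(2*ε)) :=
            mul_le_mul (hb t) hk (by positivity) hπ.le
        _ = Real.pi / (2*ε) := by ring
    · rw [indicator_of_notMem htr, hsupp t htr]; simp

/-- The truncated Hilbert transform differs from the conjugate-Poisson regularization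
by at most `π²`. -/
lemma lemC (v : ℝ → ℝ) (hvm : Measurable v) (hb : ∀ s, |v s| ≤ Real.pi) (r : ℝ)
    (hsupp : ∀ s, s ∉ Icc (-r) r → v s = 0) (ε : ℝ) (hε : 0 < ε) :
    |(∫ t in {t : ℝ | ε ≤ |t|}, v t / t) - ∫ t, v t * (t / (t^2 + ε^2))| ≤ Real.pi^2 := by
  have hπ := Real.pi_pos
  have hint1 := truncInt v hvm hb r hsupp ε hε
  have hint2 := f2Int v hvm hb r hsupp ε hε
  have hbound : Integrable (fun t : ℝ => Real.pi * (ε / (t^2 + ε^2))) :=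
    (poisson_integrable hε).const_mul _
  have hpt : ∀ t : ℝ, ‖{t : ℝ | ε ≤ |t|}.indicator (fun t => v t / t) t
      - v t * (t / (t^2 + ε^2))‖ ≤ Real.pi * (ε / (t^2 + ε^2)) := by
    intro t
    have htp : (0:ℝ) < t^2 + ε^2 := by positivity
    by_cases htS : t ∈ {t : ℝ | ε ≤ |t|}
    · have h1 : ε ≤ |t| := htS
      have habs : (0:ℝ) < |t| := lt_of_lt_of_le hε h1
      have ht0 : t ≠ 0 := fun h => by simp [h] at habs
      have key : v t / t - v t * (t / (t^2 + ε^2)) = v t * (ε^2 / (t * (t^2 + ε^2))) := by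
        field_simp; ring
      rw [indicator_of_mem htS, key, Real.norm_eq_abs, abs_mul, abs_div, abs_mul,
        abs_of_pos htp, abs_of_pos (show (0:ℝ) < ε^2 by positivity)]
      have hq : ε^2 / (|t| * (t^2+ε^2)) ≤ ε / (t^2+ε^2) := by
        rw [div_le_div_iff₀ (by positivity) htp]
        have h2 : ε * ε ≤ ε * |t| := by nlinarith
        nlinarith [mul_le_mul_of_nonneg_right h2 htp.le]
      exact mul_le_mul (hb t) hq (by positivity) hπ.le
    · have h1 : |t| < ε := not_le.mp htS
      rw [indicator_of_notMem htS, zero_sub, norm_neg, Real.norm_eq_abs, abs_mul,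
        abs_div, abs_of_pos htp]
      have hq : |t| / (t^2+ε^2) ≤ ε / (t^2+ε^2) := by gcongr
      exact mul_le_mul (hb t) hq (by positivity) hπ.le
  rw [← integral_indicator (measS ε), ← integral_sub hint1 hint2, ← Real.norm_eq_abs]
  calc ‖∫ t, ({t : ℝ | ε ≤ |t|}.indicator (fun t => v t / t) t - v t * (t / (t^2 + ε^2)))‖
      ≤ ∫ t, Real.pi * (ε / (t^2 + ε^2)) :=
        norm_integral_le_of_norm_le hbound (Eventually.of_forall hpt)
    _ = Real.pi^2 := by rw [integral_const_mul, poisson_int hε]; ring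

lemma sub_ne (x ε t : ℝ) (hε : 0 < ε) : (t:ℂ) - ((x:ℂ) + (ε:ℂ) * Complex.I) ≠ 0 := by
  intro h
  have := congrArg Complex.im h
  simp at this
  exact hε.ne' this

lemma norm_inv_le (x ε t : ℝ) (hε : 0 < ε) :
    ‖(((t:ℂ) - ((x:ℂ) + (ε:ℂ) * Complex.I))⁻¹)‖ ≤ ε⁻¹ := by
  rw [norm_inv]
  apply inv_anti₀ hε
  calc ε = |((t:ℂ) - ((x:ℂ) + (ε:ℂ) * Complex.I)).im| := by simp [abs_of_pos hε]
    _ ≤ ‖((t:ℂ) - ((x:ℂ) + (ε:ℂ) * Complex.I))‖ := Complex.abs_im_le_norm _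
    _ = ‖_‖ := rfl

lemma cont_inv (x ε : ℝ) (hε : 0 < ε) :
    Continuous (fun t : ℝ => (((t:ℂ) - ((x:ℂ) + (ε:ℂ) * Complex.I))⁻¹)) := by
  apply Continuous.inv₀
  · fun_prop
  · exact fun t => sub_ne x ε t hε

lemma int_inv (μ : Measure ℝ) [IsFiniteMeasure μ] (x ε : ℝ) (hε : 0 < ε) :
    Integrable (fun t : ℝ => (((t:ℂ) - ((x:ℂ) + (ε:ℂ) * Complex.I))⁻¹)) μ := by
  refine Integrable.mono' (integrable_const ε⁻¹) ((cont_inv x ε hε).aestronglyMeasurable) ?_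
  exact Eventually.of_forall fun t => norm_inv_le x ε t hε

lemma ker_int_mu (μ : Measure ℝ) [IsFiniteMeasure μ] (x ε : ℝ) (hε : 0 < ε) :
    Integrable (fun t : ℝ => ε / ((t - x)^2 + ε^2)) μ := by
  refine Integrable.mono' (integrable_const ε⁻¹) ?_ ?_
  · apply Continuous.aestronglyMeasurable; fun_prop (disch := intros; positivity)
  · refine Eventually.of_forall fun t => ?_
    rw [Real.norm_eq_abs, abs_of_pos (by positivity)]
    rw [div_le_iff₀ (by positivity), inv_mul_eq_div, le_div_iff₀ hε]
    nlinarith [sq_nonneg (t - x)]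

lemma im_int (μ : Measure ℝ) [IsFiniteMeasure μ] (x ε : ℝ) (hε : 0 < ε) :
    (∫ t, (((t:ℂ) - ((x:ℂ) + (ε:ℂ) * Complex.I))⁻¹) ∂μ).im
      = ∫ t, ε / ((t - x)^2 + ε^2) ∂μ := by
  rw [← Complex.imCLM_apply, ← ContinuousLinearMap.integral_comp_comm _ (int_inv μ x ε hε)]
  congr 1
  funext t
  rw [Complex.imCLM_apply, Complex.inv_im]
  simp [Complex.normSq_apply]
  ring_nf

lemma poisson_lower (μ : Measure ℝ) [IsFiniteMeasure μ] (x ε : ℝ) (hε : 0 < ε) :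
    (μ (closedBall x ε)).toReal / (2 * ε) ≤ ∫ t, ε / ((t - x)^2 + ε^2) ∂μ := by
  have hint := ker_int_mu μ x ε hε
  have h1 : ∫ t in closedBall x ε, (2 * ε)⁻¹ ∂μ
      ≤ ∫ t in closedBall x ε, ε / ((t - x)^2 + ε^2) ∂μ := by
    apply setIntegral_mono_on (integrableOn_const (measure_lt_top μ _).ne)
      hint.integrableOn measurableSet_closedBall
    intro t ht
    rw [Real.closedBall_eq_Icc] at ht
    rw [inv_le_iff_one_le_mul₀ (by positivity), ← div_le_iff₀ (by positivity),
      div_le_div_iff₀ (by positivity) (by positivity)]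
    have h2 : (t - x)^2 ≤ ε^2 := sq_le_sq' (by linarith [ht.1]) (by linarith [ht.2])
    nlinarith
  have h2 : ∫ t in closedBall x ε, ε / ((t - x)^2 + ε^2) ∂μ
      ≤ ∫ t, ε / ((t - x)^2 + ε^2) ∂μ := by
    apply setIntegral_le_integral hint
    exact Eventually.of_forall fun t => by positivity
  calc (μ (closedBall x ε)).toReal / (2 * ε)
      = ∫ t in closedBall x ε, (2 * ε)⁻¹ ∂μ := by
        rw [setIntegral_const, smul_eq_mul, div_eq_mul_inv]; rfl
    _ ≤ _ := h1.trans h2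

lemma intU (u : ℝ → ℝ) (hum : Measurable u) (hb : ∀ s, |u s| ≤ Real.pi) (r : ℝ)
    (hsupp : ∀ s, s ∉ Icc (-r) r → u s = 0) (x ε : ℝ) (hε : 0 < ε) :
    Integrable (fun t : ℝ => (u t : ℂ) * ((t:ℂ) - ((x:ℂ) + (ε:ℂ) * Complex.I))⁻¹) := by
  have hπ := Real.pi_pos
  refine Integrable.mono' (indicator_int (Real.pi * ε⁻¹) r) ?_ ?_
  · exact ((Complex.measurable_ofReal.comp hum).mul
      (cont_inv x ε hε).measurable).aestronglyMeasurable
  · refine Eventually.of_forall fun t => ?_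
    by_cases htr : t ∈ Icc (-r) r
    · rw [indicator_of_mem htr, norm_mul, Complex.norm_real, Real.norm_eq_abs]
      exact mul_le_mul (hb t) (norm_inv_le x ε t hε) (norm_nonneg _) hπ.le
    · rw [indicator_of_notMem htr, hsupp t htr]
      simp

lemma reQ (u : ℝ → ℝ) (hum : Measurable u) (hb : ∀ s, |u s| ≤ Real.pi) (r : ℝ)
    (hsupp : ∀ s, s ∉ Icc (-r) r → u s = 0) (x ε : ℝ) (hε : 0 < ε) :
    Real.pi * (cauchyTransformFn u ((x:ℂ) + (ε:ℂ) * Complex.I)).re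
      = ∫ s, u (x + s) * (s / (s^2 + ε^2)) := by
  have hπ := Real.pi_pos
  rw [cauchyTransformFn]
  rw [show ((Real.pi : ℂ))⁻¹ = ((Real.pi⁻¹ : ℝ) : ℂ) by push_cast; ring]
  rw [Complex.re_ofReal_mul]
  rw [← mul_assoc, mul_inv_cancel₀ hπ.ne', one_mul]
  have h1 : (∫ t, (u t : ℂ) * ((t:ℂ) - ((x:ℂ) + (ε:ℂ) * Complex.I))⁻¹).re
      = ∫ t, u t * ((t - x) / ((t - x)^2 + ε^2)) := by
    rw [← Complex.reCLM_apply, ← ContinuousLinearMap.integral_comp_comm _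
      (intU u hum hb r hsupp x ε hε)]
    congr 1
    funext t
    rw [Complex.reCLM_apply, Complex.mul_re, Complex.ofReal_re, Complex.ofReal_im, zero_mul,
      sub_zero, Complex.inv_re]
    simp [Complex.normSq_apply]
    ring_nf
    tauto
  rw [h1]
  have h2 := integral_add_left_eq_self (μ := (volume : Measure ℝ))
    (fun t => u t * ((t - x) / ((t - x)^2 + ε^2))) x
  rw [← h2]
  congr 1
  funext s
  ring_nf

lemma diffA (μ : Measure ℝ) [IsFiniteMeasure μ] :
    ∀ᵐ x ∂(μ.singularPart volume), ∀ M : ℝ,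
      ∀ᶠ ε in nhdsWithin (0:ℝ) (Ioi 0), M * ε ≤ (μ (closedBall x ε)).toReal := by
  set σ := μ.singularPart volume with hσ
  haveI : IsFiniteMeasure σ := isFiniteMeasure_of_le μ (Measure.singularPart_le μ volume)
  have h1 := Besicovitch.ae_tendsto_rnDeriv (volume : Measure ℝ) σ
  have h2 : (volume : Measure ℝ).rnDeriv σ =ᵐ[σ] 0 :=
    Measure.MutuallySingular.rnDeriv_ae_eq_zero
      (Measure.mutuallySingular_singularPart μ volume).symm
  filter_upwards [h1, h2] with x hx hx0
  rw [hx0] at hx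
  intro M
  rcases le_or_gt M 0 with hM | hM
  · filter_upwards [self_mem_nhdsWithin] with ε hε
    have : M * ε ≤ 0 := mul_nonpos_of_nonpos_of_nonneg hM (le_of_lt hε)
    exact this.trans ENNReal.toReal_nonneg
  · have hc : (0:ENNReal) < ENNReal.ofReal (1/M) := by
      rw [ENNReal.ofReal_pos]; positivity
    have hev : ∀ᶠ ε in nhdsWithin (0:ℝ) (Ioi 0),
        volume (closedBall x ε) / σ (closedBall x ε) < ENNReal.ofReal (1/M) :=
      hx.eventually_lt_const hc
    filter_upwards [hev, self_mem_nhdsWithin] with ε h1ε h2ε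
    have hεpos : (0:ℝ) < ε := h2ε
    have hvol : volume (closedBall x ε) = ENNReal.ofReal (2*ε) := Real.volume_closedBall x ε
    have hσ0 : σ (closedBall x ε) ≠ 0 := by
      intro h0
      rw [h0, ENNReal.div_zero] at h1ε
      · exact (not_lt.2 le_top) (h1ε.trans_le le_top)
      · rw [hvol]; simp [ENNReal.ofReal_eq_zero]; positivity
    have hσtop : σ (closedBall x ε) ≠ ⊤ := (measure_lt_top σ _).ne
    have h3 : volume (closedBall x ε) < ENNReal.ofReal (1/M) * σ (closedBall x ε) :=
      (ENNReal.div_lt_iff (Or.inl hσ0) (Or.inl hσtop)).mp h1ε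
    have h4 : σ (closedBall x ε) ≤ μ (closedBall x ε) :=
      Measure.le_iff'.mp (Measure.singularPart_le μ volume) _
    have h5 : ENNReal.ofReal (2*ε) < ENNReal.ofReal (1/M) * μ (closedBall x ε) := by
      rw [← hvol]
      exact h3.trans_le (mul_le_mul_right h4 _)
    have h6 : ENNReal.ofReal M * ENNReal.ofReal (2*ε)
        ≤ ENNReal.ofReal M * (ENNReal.ofReal (1/M) * μ (closedBall x ε)) :=
      mul_le_mul_right h5.le _
    have hMM : ENNReal.ofReal M * ENNReal.ofReal (1/M) = 1 := by
      rw [← ENNReal.ofReal_mul hM.le, mul_one_div, div_self hM.ne', ENNReal.ofReal_one]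
    rw [← mul_assoc, ← ENNReal.ofReal_mul hM.le, hMM, one_mul] at h6
    have h7 : M * (2*ε) ≤ (μ (closedBall x ε)).toReal :=
      (ENNReal.ofReal_le_iff_le_toReal (measure_lt_top μ _).ne).mp h6
    nlinarith

lemma im_one_add (μ : Measure ℝ) [IsFiniteMeasure μ] (x ε : ℝ) (hε : 0 < ε) :
    (1 + (Real.pi:ℂ) * cauchyTransform μ ((x:ℂ) + (ε:ℂ) * Complex.I)).im
      = ∫ t, ε / ((t - x)^2 + ε^2) ∂μ := by
  have hπ : ((Real.pi : ℝ) : ℂ) ≠ 0 := by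
    exact_mod_cast Complex.ofReal_ne_zero.mpr Real.pi_ne_zero
  rw [cauchyTransform, ← mul_assoc, mul_inv_cancel₀ hπ, one_mul, Complex.add_im,
    Complex.one_im, zero_add, im_int μ x ε hε]

lemma im_one_sub (ν : Measure ℝ) [IsFiniteMeasure ν] (x ε : ℝ) (hε : 0 < ε) :
    (1 - (Real.pi:ℂ) * cauchyTransform ν ((x:ℂ) + (ε:ℂ) * Complex.I)).im
      = -∫ t, ε / ((t - x)^2 + ε^2) ∂ν := by
  have hπ : ((Real.pi : ℝ) : ℂ) ≠ 0 := by
    exact_mod_cast Complex.ofReal_ne_zero.mpr Real.pi_ne_zero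
  rw [cauchyTransform, ← mul_assoc, mul_inv_cancel₀ hπ, one_mul, Complex.sub_im,
    Complex.one_im, zero_sub, im_int ν x ε hε]

end PhaseShiftAux

open PhaseShiftAux Metric

/-- If `u` is the phase shift of `(μ, ν)` then for `μˢ`-a.e. `x` the principal value
`p.v.∫ u(x+t)/t dt = +∞` and for `νˢ`-a.e. `x` it is `−∞`, where `μˢ`, `νˢ` are the
singular parts with respect to Lebesgue measure. -/
theorem stmt4 (μ ν : Measure ℝ) [IsFiniteMeasure μ] [IsFiniteMeasure ν]
    (hμsupp : ∃ R : ℝ, μ (Icc (-R) R)ᶜ = 0) (hνsupp : ∃ R : ℝ, ν (Icc (-R) R)ᶜ = 0)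
    (u : ℝ → ℝ) (hu : IsPhaseShift u μ ν) :
    (∀ᵐ x ∂(μ.singularPart volume),
      Tendsto (fun ε : ℝ => ∫ t in {t : ℝ | ε ≤ |t|}, u (x + t) / t)
        (nhdsWithin 0 (Ioi 0)) atTop) ∧
    (∀ᵐ x ∂(ν.singularPart volume),
      Tendsto (fun ε : ℝ => ∫ t in {t : ℝ | ε ≤ |t|}, u (x + t) / t)
        (nhdsWithin 0 (Ioi 0)) atBot) := by
  obtain ⟨hum, huIcc, hucs, hphase⟩ := hu
  have hπ := Real.pi_pos
  have hb : ∀ s, |u s| ≤ Real.pi := fun s =>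
    abs_le.mpr ⟨by linarith [(huIcc s).1, hπ], (huIcc s).2⟩
  obtain ⟨R0, hR0⟩ : ∃ R0, tsupport u ⊆ closedBall 0 R0 :=
    hucs.isBounded.subset_closedBall 0
  have husupp : ∀ s, s ∉ Icc (-R0) R0 → u s = 0 := by
    intro s hs
    apply image_eq_zero_of_notMem_tsupport
    intro hmem
    have h1 := hR0 hmem
    rw [mem_closedBall, dist_zero_right, Real.norm_eq_abs, abs_le] at h1
    exact hs ⟨h1.1, h1.2⟩
  -- support data for the translated function
  have hvsupp : ∀ x : ℝ, ∀ s, s ∉ Icc (-(R0 + |x|)) (R0 + |x|) → u (x + s) = 0 := by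
    intro x s hs
    apply husupp
    rw [mem_Icc, not_and_or] at hs ⊢
    rcases hs with h | h
    · push_neg at h
      left; push_neg
      have := le_abs_self x
      linarith
    · push_neg at h
      right; push_neg
      have := neg_abs_le x
      linarith
  constructor
  · -- μ side
    filter_upwards [diffA μ] with x hx
    rw [Filter.tendsto_atTop]
    intro M
    have hvm : Measurable (fun s => u (x + s)) := hum.comp (measurable_const_add x)
    filter_upwards [hx (2 * Real.exp ((M + Real.pi^2)/Real.pi)), self_mem_nhdsWithin]
      with ε h1ε h2ε
    have hεpos : (0:ℝ) < ε := h2ε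
    have hzim : (0:ℝ) < ((x:ℂ) + (ε:ℂ) * Complex.I).im := by simp [hεpos]
    obtain ⟨heq1, -⟩ := hphase ((x:ℂ) + (ε:ℂ) * Complex.I) hzim
    have hP1 : (μ (closedBall x ε)).toReal / (2*ε) ≤ ∫ t, ε / ((t - x)^2 + ε^2) ∂μ :=
      poisson_lower μ x ε hεpos
    have hP2 : Real.exp ((M + Real.pi^2)/Real.pi) ≤ ∫ t, ε / ((t - x)^2 + ε^2) ∂μ := by
      refine le_trans ?_ hP1
      rw [le_div_iff₀ (by positivity)]
      calc Real.exp ((M + Real.pi^2)/Real.pi) * (2*ε)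
          = 2 * Real.exp ((M + Real.pi^2)/Real.pi) * ε := by ring
        _ ≤ _ := h1ε
    have him := im_one_add μ x ε hεpos
    have habs : Real.exp ((M + Real.pi^2)/Real.pi)
        ≤ Real.exp ((cauchyTransformFn u ((x:ℂ) + (ε:ℂ) * Complex.I)).re) := by
      rw [← Complex.norm_exp, ← heq1]
      refine hP2.trans ?_
      calc (∫ t, ε / ((t - x)^2 + ε^2) ∂μ)
          = (1 + (Real.pi:ℂ) * cauchyTransform μ ((x:ℂ) + (ε:ℂ) * Complex.I)).im := him.symm
        _ ≤ |(1 + (Real.pi:ℂ) * cauchyTransform μ ((x:ℂ) + (ε:ℂ) * Complex.I)).im| :=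
            le_abs_self _
        _ ≤ ‖(1 + (Real.pi:ℂ) * cauchyTransform μ ((x:ℂ) + (ε:ℂ) * Complex.I))‖ :=
            Complex.abs_im_le_norm _
    have hre : (M + Real.pi^2)/Real.pi
        ≤ (cauchyTransformFn u ((x:ℂ) + (ε:ℂ) * Complex.I)).re := Real.exp_le_exp.mp habs
    have hQ := reQ u hum hb R0 husupp x ε hεpos
    have hQge : M + Real.pi^2 ≤ ∫ s, u (x + s) * (s / (s^2 + ε^2)) := by
      rw [← hQ]
      calc M + Real.pi^2 = Real.pi * ((M + Real.pi^2)/Real.pi) := by field_simp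
        _ ≤ _ := mul_le_mul_of_nonneg_left hre hπ.le
    have hlemC := lemC (fun s => u (x + s)) hvm (fun s => hb _) (R0 + |x|) (hvsupp x) ε hεpos
    have h7 := abs_sub_le_iff.mp hlemC
    linarith [h7.1, h7.2]
  · -- ν side
    filter_upwards [diffA ν] with x hx
    rw [Filter.tendsto_atBot]
    intro M
    have hvm : Measurable (fun s => u (x + s)) := hum.comp (measurable_const_add x)
    filter_upwards [hx (2 * Real.exp ((Real.pi^2 - M)/Real.pi)), self_mem_nhdsWithin]
      with ε h1ε h2ε
    have hεpos : (0:ℝ) < ε := h2ε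
    have hzim : (0:ℝ) < ((x:ℂ) + (ε:ℂ) * Complex.I).im := by simp [hεpos]
    obtain ⟨-, heq2⟩ := hphase ((x:ℂ) + (ε:ℂ) * Complex.I) hzim
    have hP1 : (ν (closedBall x ε)).toReal / (2*ε) ≤ ∫ t, ε / ((t - x)^2 + ε^2) ∂ν :=
      poisson_lower ν x ε hεpos
    have hP2 : Real.exp ((Real.pi^2 - M)/Real.pi) ≤ ∫ t, ε / ((t - x)^2 + ε^2) ∂ν := by
      refine le_trans ?_ hP1
      rw [le_div_iff₀ (by positivity)]
      calc Real.exp ((Real.pi^2 - M)/Real.pi) * (2*ε)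
          = 2 * Real.exp ((Real.pi^2 - M)/Real.pi) * ε := by ring
        _ ≤ _ := h1ε
    have hPpos : (0:ℝ) < ∫ t, ε / ((t - x)^2 + ε^2) ∂ν := (Real.exp_pos _).trans_le hP2
    have him := im_one_sub ν x ε hεpos
    have hPle : (∫ t, ε / ((t - x)^2 + ε^2) ∂ν)
        ≤ ‖(1 - (Real.pi:ℂ) * cauchyTransform ν ((x:ℂ) + (ε:ℂ) * Complex.I))‖ := by
      calc (∫ t, ε / ((t - x)^2 + ε^2) ∂ν)
          = |(1 - (Real.pi:ℂ) * cauchyTransform ν ((x:ℂ) + (ε:ℂ) * Complex.I)).im| := by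
            rw [him, abs_neg, abs_of_pos hPpos]
        _ ≤ _ := Complex.abs_im_le_norm _
    have habs : Real.exp ((cauchyTransformFn u ((x:ℂ) + (ε:ℂ) * Complex.I)).re)
        ≤ Real.exp (-((Real.pi^2 - M)/Real.pi)) := by
      rw [← Complex.norm_exp, heq2, norm_inv, Real.exp_neg]
      exact inv_anti₀ (Real.exp_pos _) (hP2.trans hPle)
    have hre : (cauchyTransformFn u ((x:ℂ) + (ε:ℂ) * Complex.I)).re
        ≤ -((Real.pi^2 - M)/Real.pi) := Real.exp_le_exp.mp habs
    have hQ := reQ u hum hb R0 husupp x ε hεpos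
    have hQle : (∫ s, u (x + s) * (s / (s^2 + ε^2))) ≤ M - Real.pi^2 := by
      rw [← hQ]
      calc Real.pi * (cauchyTransformFn u ((x:ℂ) + (ε:ℂ) * Complex.I)).re
          ≤ Real.pi * (-((Real.pi^2 - M)/Real.pi)) := mul_le_mul_of_nonneg_left hre hπ.le
        _ = M - Real.pi^2 := by field_simp; ring
    have hlemC := lemC (fun s => u (x + s)) hvm (fun s => hb _) (R0 + |x|) (hvsupp x) ε hεpos
    have h7 := abs_sub_le_iff.mp hlemC
    linarith [h7.1, h7.2]
end

section
/- Let x, y ∈ ℝ with x < y and let u = π·χ_{(x,y)} be π times the indicator function of the interval (x, y). If u is the phase shift of a pair (μ, ν) of finite positive compactly supported Borel measures on ℝ, then there exist positive constants b and c such that μ = b·δ_x and ν = c·δ_y (Dirac masses at x and y). -/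
open MeasureTheory Set

-- integrability of the Cauchy kernel
lemma integrable_kernel (μ : Measure ℝ) [IsFiniteMeasure μ] {z : ℂ} (hz : z.im ≠ 0) :
    Integrable (fun t : ℝ => ((t : ℂ) - z)⁻¹) μ := by
  have hne : ∀ t : ℝ, (t : ℂ) - z ≠ 0 := by
    intro t h
    apply hz
    have := congrArg Complex.im h
    simpa using this.symm
  refine (integrable_const (|z.im|⁻¹)).mono' ?_ ?_
  · exact ((Complex.continuous_ofReal.sub continuous_const).inv₀ hne).aestronglyMeasurable
  · refine Filter.Eventually.of_forall fun t => ?_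
    rw [norm_inv]
    refine inv_anti₀ (abs_pos.mpr hz) ?_
    calc |z.im| = |((t:ℂ) - z).im| := by simp
    _ ≤ ‖(t:ℂ) - z‖ := Complex.abs_im_le_norm _

lemma kernel_im (z : ℂ) (t : ℝ) :
    (((t : ℂ) - z)⁻¹).im = z.im / ((t - z.re)^2 + z.im^2) := by
  rw [Complex.inv_im]
  simp [Complex.normSq_apply, Complex.sub_im, Complex.sub_re, neg_div]
  ring_nf

lemma poisson_hasDerivAt {ε : ℝ} (hε : 0 < ε) (t a : ℝ) :
    HasDerivAt (fun a => Real.arctan ((a - t)/ε)) (ε / ((t - a)^2 + ε^2)) a := by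
  have h1 : HasDerivAt (fun a : ℝ => (a - t)/ε) (1/ε) a := by
    simpa using ((hasDerivAt_id a).sub_const t).div_const ε
  have := (Real.hasDerivAt_arctan ((a - t)/ε)).comp a h1
  refine this.congr_deriv ?_
  rw [div_pow]
  field_simp
  ring

lemma poisson_integrable {ε : ℝ} (hε : 0 < ε) (t : ℝ) :
    Integrable (fun a : ℝ => ε / ((t - a)^2 + ε^2)) := by
  have h1 : Integrable (fun a : ℝ => (1 + ((a - t)/ε)^2)⁻¹) := by
    have := (integrable_inv_one_add_sq.comp_div (ne_of_gt hε)).comp_sub_right t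
    simpa using this
  have := h1.const_mul (ε⁻¹)
  refine this.congr (Filter.Eventually.of_forall fun a => ?_)
  simp only [div_pow]
  rw [eq_comm]
  have hd : (t - a)^2 + ε^2 ≠ 0 := by positivity
  field_simp
  ring

lemma poisson_integral_Iic {ε : ℝ} (hε : 0 < ε) (t s : ℝ) :
    ∫ a in Iic s, ε / ((t - a)^2 + ε^2) = Real.arctan ((s - t)/ε) + Real.pi/2 := by
  have := MeasureTheory.integral_Iic_of_hasDerivAt_of_tendsto'
    (f := fun a => Real.arctan ((a - t)/ε)) (f' := fun a => ε / ((t - a)^2 + ε^2))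
    (a := s) (m := -(Real.pi/2)) (fun a _ => poisson_hasDerivAt hε t a)
    (poisson_integrable hε t).integrableOn ?_
  · rw [this]; ring
  · have h2 : Filter.Tendsto (fun a : ℝ => (a - t)/ε) Filter.atBot Filter.atBot := by
      exact (Filter.tendsto_atBot_add_const_right _ (-t) Filter.tendsto_id).atBot_div_const hε
    exact (tendsto_nhds_of_tendsto_nhdsWithin Real.tendsto_arctan_atBot).comp h2

lemma poisson_integrable_meas (μ : Measure ℝ) [IsFiniteMeasure μ] {ε : ℝ} (hε : 0 < ε) (a : ℝ) :
    Integrable (fun t : ℝ => ε / ((t - a)^2 + ε^2)) μ := by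
  refine (integrable_const (ε⁻¹)).mono' ?_ (Filter.Eventually.of_forall fun t => ?_)
  · exact (Continuous.div continuous_const (by continuity) fun t => by positivity).aestronglyMeasurable
  · rw [Real.norm_eq_abs, abs_of_nonneg (by positivity)]
    calc ε / ((t - a)^2 + ε^2) ≤ ε / ε^2 := by
          rw [div_le_div_iff₀ (by positivity) (by positivity)]
          nlinarith [sq_nonneg (t - a)]
    _ = ε⁻¹ := by rw [sq]; field_simp

lemma poisson_eq (μ ρ : Measure ℝ) [IsFiniteMeasure μ] [IsFiniteMeasure ρ]
    (h : ∀ z : ℂ, 0 < z.im → ∫ t, ((t:ℂ) - z)⁻¹ ∂μ = ∫ t, ((t:ℂ) - z)⁻¹ ∂ρ)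
    {ε : ℝ} (hε : 0 < ε) (a : ℝ) :
    ∫ t, ε / ((t - a)^2 + ε^2) ∂μ = ∫ t, ε / ((t - a)^2 + ε^2) ∂ρ := by
  set z : ℂ := (a : ℂ) + (ε : ℂ) * Complex.I with hzdef
  have hzim : z.im = ε := by simp [hzdef]
  have hzre : z.re = a := by simp [hzdef]
  have hne : z.im ≠ 0 := by rw [hzim]; exact ne_of_gt hε
  have h2 : ∫ t, (((t:ℂ) - z)⁻¹).im ∂μ = ∫ t, (((t:ℂ) - z)⁻¹).im ∂ρ := by
    have e1 := Complex.imCLM.integral_comp_comm (integrable_kernel μ hne)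
    have e2 := Complex.imCLM.integral_comp_comm (integrable_kernel ρ hne)
    simp only [Complex.imCLM_apply] at e1 e2
    rw [e1, e2, h z (by rw [hzim]; exact hε)]
  simpa only [kernel_im, hzim, hzre] using h2

lemma lintegral_arctan_rep (m : Measure ℝ) [IsFiniteMeasure m] {ε : ℝ} (hε : 0 < ε) (s : ℝ) :
    ∫⁻ t, ENNReal.ofReal (Real.arctan ((s - t)/ε) + Real.pi/2) ∂m
      = ∫⁻ a in Iic s, ∫⁻ t, ENNReal.ofReal (ε / ((t - a)^2 + ε^2)) ∂m := by
  have hmeas : AEMeasurable (Function.uncurry fun (a t : ℝ) =>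
      ENNReal.ofReal (ε / ((t - a)^2 + ε^2))) ((volume.restrict (Iic s)).prod m) := by
    refine Measurable.aemeasurable (Measurable.ennreal_ofReal ?_)
    have : Continuous fun p : ℝ × ℝ => ε / ((p.2 - p.1)^2 + ε^2) := by
      refine Continuous.div continuous_const (by fun_prop) fun p => by positivity
    exact this.measurable
  have swap := MeasureTheory.lintegral_lintegral_swap hmeas
  rw [swap]
  refine lintegral_congr fun t => ?_
  rw [← MeasureTheory.ofReal_integral_eq_lintegral_ofReal
    ((poisson_integrable hε t).integrableOn)
    (Filter.Eventually.of_forall fun a => by positivity), poisson_integral_Iic hε t s]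

lemma arctan_eq (μ ρ : Measure ℝ) [IsFiniteMeasure μ] [IsFiniteMeasure ρ]
    (hP : ∀ ε : ℝ, 0 < ε → ∀ a, ∫ t, ε / ((t - a)^2 + ε^2) ∂μ = ∫ t, ε / ((t - a)^2 + ε^2) ∂ρ)
    {ε : ℝ} (hε : 0 < ε) (s : ℝ) :
    ∫ t, (Real.arctan ((s - t)/ε) + Real.pi/2) ∂μ
      = ∫ t, (Real.arctan ((s - t)/ε) + Real.pi/2) ∂ρ := by
  have hnn : ∀ u : ℝ, 0 ≤ Real.arctan u + Real.pi/2 := fun u => by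
    have := Real.neg_pi_div_two_lt_arctan u
    linarith
  have hint : ∀ (m : Measure ℝ) [IsFiniteMeasure m],
      Integrable (fun t => Real.arctan ((s - t)/ε) + Real.pi/2) m := by
    intro m _
    refine (integrable_const Real.pi).mono' ?_ (Filter.Eventually.of_forall fun t => ?_)
    · exact (((Real.continuous_arctan.comp (by fun_prop)).add continuous_const)).aestronglyMeasurable
    · rw [Real.norm_eq_abs, abs_of_nonneg (hnn _)]
      have := Real.arctan_lt_pi_div_two ((s - t)/ε)
      linarith
  have hl : ∫⁻ t, ENNReal.ofReal (Real.arctan ((s - t)/ε) + Real.pi/2) ∂μ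
      = ∫⁻ t, ENNReal.ofReal (Real.arctan ((s - t)/ε) + Real.pi/2) ∂ρ := by
    rw [lintegral_arctan_rep μ hε s, lintegral_arctan_rep ρ hε s]
    refine lintegral_congr fun a => ?_
    rw [← MeasureTheory.ofReal_integral_eq_lintegral_ofReal (poisson_integrable_meas μ hε a)
      (Filter.Eventually.of_forall fun t => by positivity),
      ← MeasureTheory.ofReal_integral_eq_lintegral_ofReal (poisson_integrable_meas ρ hε a)
      (Filter.Eventually.of_forall fun t => by positivity), hP ε hε a]
  rw [← MeasureTheory.ofReal_integral_eq_lintegral_ofReal (hint μ)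
      (Filter.Eventually.of_forall fun t => hnn _),
    ← MeasureTheory.ofReal_integral_eq_lintegral_ofReal (hint ρ)
      (Filter.Eventually.of_forall fun t => hnn _)] at hl
  exact (ENNReal.ofReal_eq_ofReal_iff
    (integral_nonneg fun t => hnn _) (integral_nonneg fun t => hnn _)).mp hl

lemma tendsto_arctan_integral (m : Measure ℝ) [IsFiniteMeasure m] (s : ℝ) :
    Filter.Tendsto (fun n : ℕ => ∫ t, (Real.arctan ((s - t) * (n+1)) + Real.pi/2) ∂m)
      Filter.atTop
      (nhds (Real.pi * (m (Iio s)).toReal + Real.pi/2 * (m {s}).toReal)) := by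
  set f : ℝ → ℝ := fun t => Set.indicator (Iio s) (fun _ => Real.pi) t
    + Set.indicator {s} (fun _ => Real.pi/2) t with hf
  have hfi : ∫ t, f t ∂m = Real.pi * (m (Iio s)).toReal + Real.pi/2 * (m {s}).toReal := by
    rw [hf]
    rw [integral_add ((integrable_const Real.pi).indicator measurableSet_Iio)
      ((integrable_const (Real.pi/2)).indicator (measurableSet_singleton s)),
      integral_indicator_const _ measurableSet_Iio,
      integral_indicator_const _ (measurableSet_singleton s)]
    simp [mul_comm]
    rfl
  rw [← hfi]
  have hnplus : Filter.Tendsto (fun n : ℕ => ((n:ℝ)+1)) Filter.atTop Filter.atTop :=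
    Filter.tendsto_atTop_add_const_right _ 1 tendsto_natCast_atTop_atTop
  refine MeasureTheory.tendsto_integral_of_dominated_convergence (fun _ => Real.pi)
    (fun n => ?_) (integrable_const _) (fun n => Filter.Eventually.of_forall fun t => ?_)
    (Filter.Eventually.of_forall fun t => ?_)
  · exact ((Real.continuous_arctan.comp (by fun_prop)).add continuous_const).aestronglyMeasurable
  · have h1 := Real.neg_pi_div_two_lt_arctan ((s - t) * (n+1))
    have h2 := Real.arctan_lt_pi_div_two ((s - t) * (n+1))
    rw [Real.norm_eq_abs, abs_le]
    constructor <;> linarith [Real.pi_pos]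
  · rcases lt_trichotomy t s with ht | ht | ht
    · have hfv : f t = Real.pi := by
        simp [hf, Set.indicator_apply, ht, ne_of_lt ht]
      rw [hfv]
      have harg : Filter.Tendsto (fun n : ℕ => (s - t) * (n+1)) Filter.atTop Filter.atTop :=
        Filter.Tendsto.const_mul_atTop (sub_pos.2 ht) hnplus
      have := ((tendsto_nhds_of_tendsto_nhdsWithin Real.tendsto_arctan_atTop).comp harg).add_const
        (Real.pi/2)
      convert this using 2
      rfl
      ring
    · have hfv : f t = Real.pi/2 := by simp [hf, Set.indicator_apply, ht]
      rw [hfv]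
      subst ht
      simp only [sub_self, zero_mul, Real.arctan_zero, zero_add]
      exact tendsto_const_nhds
    · have hfv : f t = 0 := by
        simp [hf, Set.indicator_apply, not_lt.2 ht.le, (ne_of_gt ht)]
      rw [hfv]
      have harg : Filter.Tendsto (fun n : ℕ => (s - t) * (n+1)) Filter.atTop Filter.atBot := by
        have : Filter.Tendsto (fun n : ℕ => -((t - s) * (n+1))) Filter.atTop Filter.atBot := by
          refine Filter.tendsto_neg_atBot_iff.mpr ?_
          exact Filter.Tendsto.const_mul_atTop (sub_pos.2 ht) hnplus
        refine this.congr fun n => by ring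
      have := ((tendsto_nhds_of_tendsto_nhdsWithin Real.tendsto_arctan_atBot).comp harg).add_const
        (Real.pi/2)
      convert this using 2
      rfl
      ring

lemma countable_atoms (μ : Measure ℝ) [IsFiniteMeasure μ] :
    Set.Countable {t : ℝ | μ {t} ≠ 0} := by
  have := Measure.countable_meas_pos_of_disjoint_iUnion (μ := μ)
    (As := fun t : ℝ => ({t} : Set ℝ)) (fun t => measurableSet_singleton t)
    (fun a b hab => by simpa [Function.onFun] using disjoint_singleton.mpr hab)
  simpa [pos_iff_ne_zero] using this

lemma measure_eq_of_cauchy (μ ρ : Measure ℝ) [IsFiniteMeasure μ] [IsFiniteMeasure ρ]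
    (h : ∀ z : ℂ, 0 < z.im → ∫ t, ((t:ℂ) - z)⁻¹ ∂μ = ∫ t, ((t:ℂ) - z)⁻¹ ∂ρ) : μ = ρ := by
  have hP : ∀ ε : ℝ, 0 < ε → ∀ a, ∫ t, ε / ((t - a)^2 + ε^2) ∂μ
      = ∫ t, ε / ((t - a)^2 + ε^2) ∂ρ := fun ε hε a => poisson_eq μ ρ h hε a
  -- the half-plane limit identity
  have hlim : ∀ s : ℝ, Real.pi * (μ (Iio s)).toReal + Real.pi/2 * (μ {s}).toReal
      = Real.pi * (ρ (Iio s)).toReal + Real.pi/2 * (ρ {s}).toReal := by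
    intro s
    refine tendsto_nhds_unique (tendsto_arctan_integral μ s)
      ((tendsto_arctan_integral ρ s).congr fun n => ?_)
    have hε : (0:ℝ) < 1/(n+1) := by positivity
    have key := arctan_eq μ ρ hP hε s
    have harg : ∀ t : ℝ, (s - t)/(1/(n+1):ℝ) = (s - t) * (n+1) := fun t => by
      field_simp
    simp only [harg] at key
    exact key.symm
  -- atom sets
  set D : Set ℝ := {t : ℝ | μ {t} ≠ 0} ∪ {t : ℝ | ρ {t} ≠ 0} with hD
  have hDc : D.Countable := (countable_atoms μ).union (countable_atoms ρ)
  have hdense : Dense Dᶜ := hDc.dense_compl ℝ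
  have hIio : ∀ s ∉ D, μ (Iio s) = ρ (Iio s) := by
    intro s hs
    simp only [hD, Set.mem_union, Set.mem_setOf_eq, not_or, not_not] at hs
    have := hlim s
    rw [hs.1, hs.2] at this
    simp only [ENNReal.toReal_zero, mul_zero, add_zero] at this
    have h2 := mul_left_cancel₀ Real.pi_ne_zero this
    exact (ENNReal.toReal_eq_toReal_iff' (measure_ne_top μ _) (measure_ne_top ρ _)).mp h2
  have hIic : ∀ a : ℝ, μ (Iic a) = ρ (Iic a) := by
    intro a
    have htends : ∀ (m : Measure ℝ) [IsFiniteMeasure m],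
        Filter.Tendsto (fun n : ℕ => m (Iic (a + 1/(n+1)))) Filter.atTop (nhds (m (Iic a))) := by
      intro m _
      have hanti : Antitone fun n : ℕ => Iic (a + 1/((n:ℝ)+1)) := by
        intro n k hnk
        apply Iic_subset_Iic.mpr
        have : (1:ℝ)/(k+1) ≤ 1/(n+1) := by
          apply one_div_le_one_div_of_le (by positivity)
          exact_mod_cast Nat.succ_le_succ hnk
        linarith
      have hiInter : ⋂ n : ℕ, Iic (a + 1/((n:ℝ)+1)) = Iic a := by
        ext b
        simp only [Set.mem_iInter, Set.mem_Iic]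
        constructor
        · intro hb
          by_contra hab
          push_neg at hab
          obtain ⟨n, hn⟩ := exists_nat_one_div_lt (sub_pos.2 hab)
          have := hb n
          linarith
        · intro hb n
          have : (0:ℝ) < 1/(n+1) := by positivity
          linarith
      have := tendsto_measure_iInter_atTop (μ := m)
        (s := fun n : ℕ => Iic (a + 1/((n:ℝ)+1)))
        (fun n => nullMeasurableSet_Iic) hanti ⟨0, measure_ne_top m _⟩
      rw [hiInter] at this
      exact this
    have hle : ∀ n : ℕ, μ (Iic a) ≤ ρ (Iic (a + 1/(n+1)))
        ∧ ρ (Iic a) ≤ μ (Iic (a + 1/(n+1))) := by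
      intro n
      have hnonempty : (Ioo a (a + 1/((n:ℝ)+1))).Nonempty :=
        nonempty_Ioo.mpr (lt_add_of_pos_right _ (by positivity))
      obtain ⟨t, htD, ht⟩ := hdense.exists_mem_open isOpen_Ioo hnonempty
      have h1 : Iic a ⊆ Iio t := Iic_subset_Iio.mpr ht.1
      have h2 : Iio t ⊆ Iic (a + 1/((n:ℝ)+1)) :=
        subset_trans (Iio_subset_Iio ht.2.le) Iio_subset_Iic_self
      have heq := hIio t htD
      constructor
      · calc μ (Iic a) ≤ μ (Iio t) := measure_mono h1
        _ = ρ (Iio t) := heq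
        _ ≤ ρ (Iic (a + 1/(n+1))) := measure_mono h2
      · calc ρ (Iic a) ≤ ρ (Iio t) := measure_mono h1
        _ = μ (Iio t) := heq.symm
        _ ≤ μ (Iic (a + 1/(n+1))) := measure_mono h2
    refine le_antisymm ?_ ?_
    · exact ge_of_tendsto (htends ρ) (Filter.Eventually.of_forall fun n => (hle n).1)
    · exact ge_of_tendsto (htends μ) (Filter.Eventually.of_forall fun n => (hle n).2)
  exact Measure.ext_of_Iic μ ρ hIic

lemma sub_ne_zero_of_im {z : ℂ} (hz : z.im ≠ 0) (t : ℝ) : (t:ℂ) - z ≠ 0 := by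
  intro h
  apply hz
  have := congrArg Complex.im h
  simpa using this.symm

lemma integral_kernel_interval {z : ℂ} (hz : 0 < z.im) (x y : ℝ) :
    ∫ t in x..y, ((t:ℂ) - z)⁻¹ = Complex.log ((y:ℂ) - z) - Complex.log ((x:ℂ) - z) := by
  refine intervalIntegral.integral_eq_sub_of_hasDerivAt
    (f := fun t : ℝ => Complex.log ((t:ℂ) - z)) (fun t _ => ?_) ?_
  · have hmem : ((t:ℂ) - z) ∈ Complex.slitPlane := by
      refine Or.inr ?_
      simpa using ne_of_lt (neg_neg_iff_pos.mpr hz)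
    have h1 : HasDerivAt (fun w : ℂ => Complex.log (w - z)) (((t:ℂ) - z)⁻¹) ((t:ℂ)) := by
      have := (Complex.hasDerivAt_log hmem).comp (t:ℂ) ((hasDerivAt_id ((t:ℂ))).sub_const z)
      simp at this
      exact this
    exact h1.comp_ofReal
  · exact ((Complex.continuous_ofReal.sub continuous_const).inv₀
      (sub_ne_zero_of_im (ne_of_gt hz))).intervalIntegrable x y

lemma exp_KU {x y : ℝ} (hxy : x < y) {z : ℂ} (hz : 0 < z.im) :
    Complex.exp (cauchyTransformFn
        (fun t => Real.pi * (Ioo x y).indicator (fun _ => (1 : ℝ)) t) z)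
      = ((y:ℂ) - z) / ((x:ℂ) - z) := by
  have hπ : (Real.pi : ℂ) ≠ 0 := Complex.ofReal_ne_zero.mpr Real.pi_ne_zero
  have hint : ∫ t, ((Real.pi * (Ioo x y).indicator (fun _ => (1:ℝ)) t : ℝ) : ℂ)
      * ((t:ℂ) - z)⁻¹
      = (Real.pi : ℂ) * (Complex.log ((y:ℂ) - z) - Complex.log ((x:ℂ) - z)) := by
    have heq : (fun t : ℝ => ((Real.pi * (Ioo x y).indicator (fun _ => (1:ℝ)) t : ℝ) : ℂ)
        * ((t:ℂ) - z)⁻¹)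
        = fun t : ℝ => Set.indicator (Ioo x y)
          (fun t : ℝ => (Real.pi : ℂ) * ((t:ℂ) - z)⁻¹) t := by
      funext t
      by_cases ht : t ∈ Ioo x y
      · simp [Set.indicator_of_mem ht]
      · simp [Set.indicator_of_notMem ht]
    rw [heq, integral_indicator measurableSet_Ioo, ← integral_Ioc_eq_integral_Ioo,
      ← intervalIntegral.integral_of_le hxy.le, intervalIntegral.integral_const_mul,
      integral_kernel_interval hz x y]
  rw [cauchyTransformFn, hint, ← mul_assoc, inv_mul_cancel₀ hπ, one_mul,
    Complex.exp_sub, Complex.exp_log (sub_ne_zero_of_im (ne_of_gt hz) y),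
    Complex.exp_log (sub_ne_zero_of_im (ne_of_gt hz) x)]

/-- If `u = π·χ_(x,y)` (with `x < y`) is the phase shift of a pair `(μ, ν)` of finite
positive compactly supported Borel measures, then `μ = b·δ_x` and `ν = c·δ_y` for some
positive constants `b`, `c`. -/
theorem stmt5 (x y : ℝ) (hxy : x < y) (μ ν : Measure ℝ)
    [IsFiniteMeasure μ] [IsFiniteMeasure ν]
    (hμsupp : ∃ R : ℝ, μ (Icc (-R) R)ᶜ = 0) (hνsupp : ∃ R : ℝ, ν (Icc (-R) R)ᶜ = 0)
    (hu : IsPhaseShift (fun t => Real.pi * (Ioo x y).indicator (fun _ => (1 : ℝ)) t) μ ν) :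
    ∃ b c : NNReal, 0 < b ∧ 0 < c ∧
      μ = b • Measure.dirac x ∧ ν = c • Measure.dirac y := by
  obtain ⟨-, -, -, hmain⟩ := hu
  have hb0 : (0:ℝ) < y - x := sub_pos.2 hxy
  have hπ : (Real.pi : ℂ) ≠ 0 := Complex.ofReal_ne_zero.mpr Real.pi_ne_zero
  refine ⟨(y - x).toNNReal, (y - x).toNNReal, Real.toNNReal_pos.2 hb0,
    Real.toNNReal_pos.2 hb0, ?_, ?_⟩
  · refine measure_eq_of_cauchy μ _ (fun z hz => ?_)
    have hx0 : (x:ℂ) - z ≠ 0 := sub_ne_zero_of_im (ne_of_gt hz) x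
    have h1 := (hmain z hz).1
    rw [exp_KU hxy hz, cauchyTransform, ← mul_assoc, mul_inv_cancel₀ hπ, one_mul] at h1
    have hS : ∫ t, ((t:ℂ) - z)⁻¹ ∂μ = ((y:ℂ) - z)/((x:ℂ) - z) - 1 := eq_sub_of_add_eq' h1
    rw [hS, integral_smul_nnreal_measure, integral_dirac, NNReal.smul_def,
      Real.coe_toNNReal _ hb0.le, Complex.real_smul]
    push_cast
    field_simp
    ring
  · refine measure_eq_of_cauchy ν _ (fun z hz => ?_)
    have hy0 : (y:ℂ) - z ≠ 0 := sub_ne_zero_of_im (ne_of_gt hz) y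
    have h2 := (hmain z hz).2
    rw [exp_KU hxy hz, cauchyTransform, ← mul_assoc, mul_inv_cancel₀ hπ, one_mul] at h2
    have h3 := congrArg Inv.inv h2
    rw [inv_inv, inv_div] at h3
    have hT : ∫ t, ((t:ℂ) - z)⁻¹ ∂ν = 1 - ((x:ℂ) - z)/((y:ℂ) - z) := by
      linear_combination h3
    rw [hT, integral_smul_nnreal_measure, integral_dirac, NNReal.smul_def,
      Real.coe_toNNReal _ hb0.le, Complex.real_smul]
    push_cast
    field_simp
    ring
end

section
/- Let u be the phase shift of the pair (μ, ν) of finite positive compactly supported Borel measures on ℝ, and let x ∈ ℝ. Then: (a) μ({x}) > 0 if and only if ∫_{x−1}^{x+1} (π·χ_{(x, x+1)}(y) − u(y)) / (y − x) dy < ∞ (the integrand is nonnegative almost everywhere on (x−1, x+1)); (b) ν({x}) > 0 if and only if ∫_{x−1}^{x+1} (π·χ_{(x−1, x)}(y) − u(y)) / (x − y) dy < ∞ (again the integrand is nonnegative almost everywhere). -/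
open MeasureTheory Set Filter Real Topology
open scoped ENNReal

namespace Stmt9Aux

lemma abs_inv_sub_le {t x y : ℝ} (hy : 0 < y) :
    ‖((t:ℂ) - (↑x + ↑y * Complex.I))⁻¹‖ ≤ y⁻¹ := by
  rw [norm_inv]
  have h1 : y ≤ ‖((t:ℂ) - (↑x + ↑y * Complex.I))‖ := by
    have := Complex.abs_im_le_norm ((t:ℂ) - (↑x + ↑y * Complex.I))
    simp only [Complex.sub_im, Complex.ofReal_im, Complex.add_im, Complex.mul_im,
      Complex.I_im, Complex.I_re, Complex.ofReal_re] at this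
    rw [show (0:ℝ) - (0 + (y * 1 + 0 * 0)) = -y by ring] at this
    simpa [abs_of_pos hy] using this
  have h0 : (0:ℝ) < ‖((t:ℂ) - (↑x + ↑y * Complex.I))‖ := lt_of_lt_of_le hy h1
  exact inv_anti₀ hy h1

lemma integrable_inv_sub (m : Measure ℝ) [IsFiniteMeasure m] (x : ℝ) {y : ℝ} (hy : 0 < y) :
    Integrable (fun t : ℝ => ((t:ℂ) - (↑x + ↑y * Complex.I))⁻¹) m := by
  have hmeas : Measurable (fun t : ℝ => ((t:ℂ) - (↑x + ↑y * Complex.I))⁻¹) :=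
    (Complex.measurable_ofReal.sub measurable_const).inv
  exact (integrable_const (y⁻¹)).mono' hmeas.aestronglyMeasurable
    (Eventually.of_forall fun t => abs_inv_sub_le hy)

/-- Atom limit: `∫ y (t-(x+iy))⁻¹ dm → i·m{x}` as `y → 0⁺`. -/
lemma tendsto_integral_atom (m : Measure ℝ) [IsFiniteMeasure m] (x : ℝ) :
    Tendsto (fun y : ℝ => ∫ t, (y:ℂ) * ((t:ℂ) - (↑x + ↑y * Complex.I))⁻¹ ∂m)
      (𝓝[>] 0) (𝓝 (((m {x}).toReal : ℂ) * Complex.I)) := by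
  have key : Tendsto (fun y : ℝ => ∫ t, (y:ℂ) * ((t:ℂ) - (↑x + ↑y * Complex.I))⁻¹ ∂m)
      (𝓝[>] 0) (𝓝 (∫ t, ({x} : Set ℝ).indicator (fun _ => Complex.I) t ∂m)) := by
    apply tendsto_integral_filter_of_dominated_convergence (fun _ => (1:ℝ))
    · filter_upwards [self_mem_nhdsWithin] with y hy
      exact (((Complex.measurable_ofReal.sub measurable_const).inv).const_mul
        (y:ℂ)).aestronglyMeasurable
    · filter_upwards [self_mem_nhdsWithin] with y (hy : 0 < y)
      refine Eventually.of_forall fun t => ?_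
      rw [norm_mul, Complex.norm_real, Real.norm_eq_abs, abs_of_pos hy]
      calc y * ‖((t:ℂ) - (↑x + ↑y * Complex.I))⁻¹‖ ≤ y * y⁻¹ :=
            mul_le_mul_of_nonneg_left (abs_inv_sub_le hy) hy.le
        _ = 1 := mul_inv_cancel₀ hy.ne'
    · exact integrable_const 1
    · refine Eventually.of_forall fun t => ?_
      by_cases ht : t = x
      · subst ht
        have : ∀ y ∈ Ioi (0:ℝ), (y:ℂ) * ((t:ℂ) - (↑t + ↑y * Complex.I))⁻¹ = Complex.I := by
          intro y hy
          have hy' : (y:ℂ) ≠ 0 := Complex.ofReal_ne_zero.2 (ne_of_gt hy)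
          rw [show (t:ℂ) - (↑t + ↑y * Complex.I) = ↑y * (-Complex.I) by ring, mul_inv,
            show (-Complex.I)⁻¹ = Complex.I by rw [inv_neg, Complex.inv_I, neg_neg], ← mul_assoc, mul_inv_cancel₀ hy', one_mul]
        rw [show ({t} : Set ℝ).indicator (fun _ => Complex.I) t = Complex.I by simp]
        exact tendsto_const_nhds.congr' (by filter_upwards [self_mem_nhdsWithin] with y hy
          using (this y hy).symm)
      · have h1 : Tendsto (fun y : ℝ => (y:ℂ) * ((t:ℂ) - (↑x + ↑y * Complex.I))⁻¹)
            (𝓝 0) (𝓝 ((0:ℂ) * ((t:ℂ) - (↑x + ↑0 * Complex.I))⁻¹)) := by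
          apply Tendsto.mul
          · exact (Complex.continuous_ofReal.tendsto 0)
          · apply Tendsto.inv₀
            · exact (tendsto_const_nhds.sub ((tendsto_const_nhds.add
                ((Complex.continuous_ofReal.tendsto 0).mul tendsto_const_nhds))))
            · simp only [Complex.ofReal_zero, zero_mul, add_zero]
              exact sub_ne_zero.2 (by exact_mod_cast fun h => ht (by exact_mod_cast h))
        rw [show ({x} : Set ℝ).indicator (fun _ => Complex.I) t = 0 by simp [ht]]
        simpa using h1.mono_left nhdsWithin_le_nhds
  rw [integral_indicator (measurableSet_singleton x), setIntegral_const] at key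
  rwa [Complex.real_smul] at key


/-- The Poisson-conjugate kernel. -/
noncomputable def ker (x y t : ℝ) : ℝ := (t - x) / ((t - x)^2 + y^2)

lemma ker_measurable (x y : ℝ) : Measurable (ker x y) := by
  unfold ker
  exact (measurable_id.sub measurable_const).div
    (((measurable_id.sub measurable_const).pow measurable_const).add measurable_const)

lemma ker_denom_pos {x t : ℝ} {y : ℝ} (hy : 0 < y) : 0 < (t - x)^2 + y^2 :=
  add_pos_of_nonneg_of_pos (sq_nonneg _) (pow_pos hy 2)

lemma abs_ker_le {x y : ℝ} (hy : 0 < y) (t : ℝ) : |ker x y t| ≤ (2*y)⁻¹ := by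
  unfold ker
  rw [abs_div, abs_of_pos (ker_denom_pos hy)]
  rw [div_le_iff₀ (ker_denom_pos hy), ← sub_nonneg]
  have h : (2*y)⁻¹ * ((t - x)^2 + y^2) - |t - x| =
      (2*y)⁻¹ * ((|t-x| - y)^2) := by
    have : |t-x|^2 = (t-x)^2 := sq_abs _
    field_simp
    nlinarith [sq_abs (t-x)]
  rw [h]
  positivity

lemma exists_support_Icc {u : ℝ → ℝ} (hcs : HasCompactSupport u) :
    ∃ R : ℝ, ∀ t, t ∉ Icc (-R) R → u t = 0 := by
  obtain ⟨r, hr⟩ := hcs.isBounded.subset_closedBall 0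
  refine ⟨r, fun t ht => ?_⟩
  by_contra h
  have : t ∈ tsupport u := subset_tsupport u h
  have := hr this
  rw [Real.closedBall_eq_Icc, zero_sub, zero_add] at this
  exact ht this

lemma integrable_of_support_bound {E : Type*} [NormedAddCommGroup E] {f : ℝ → E}
    (hf : AEStronglyMeasurable f (volume : Measure ℝ)) (R C : ℝ)
    (h : ∀ t, ‖f t‖ ≤ (Icc (-R) R).indicator (fun _ => C) t) : Integrable f := by
  refine Integrable.mono' ?_ hf (Eventually.of_forall h)
  exact (integrable_indicator_iff measurableSet_Icc).2
    (integrableOn_const measure_Icc_lt_top.ne)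

section ReFormula

variable {u : ℝ → ℝ}

lemma integrable_cauchyFn_integrand (hmeas : Measurable u) (hbd : ∀ t, u t ∈ Icc (0:ℝ) Real.pi) (hcs : HasCompactSupport u) (x : ℝ) {y : ℝ} (hy : 0 < y) :
    Integrable (fun t : ℝ => (u t : ℂ) * ((t:ℂ) - (↑x + ↑y * Complex.I))⁻¹) := by
  obtain ⟨R, hR⟩ := exists_support_Icc hcs
  refine integrable_of_support_bound ?_ R (Real.pi * y⁻¹) fun t => ?_
  · exact ((Complex.measurable_ofReal.comp hmeas).mul
      ((Complex.measurable_ofReal.sub measurable_const).inv)).aestronglyMeasurable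
  · by_cases ht : t ∈ Icc (-R) R
    · rw [indicator_of_mem ht, norm_mul, Complex.norm_real, Real.norm_eq_abs,
        abs_of_nonneg (hbd t).1]
      exact mul_le_mul (hbd t).2 (abs_inv_sub_le hy) (norm_nonneg _) Real.pi_pos.le
    · rw [indicator_of_notMem ht, hR t ht]
      simp

lemma integrable_mul_ker (hmeas : Measurable u) (hbd : ∀ t, u t ∈ Icc (0:ℝ) Real.pi) (hcs : HasCompactSupport u) (x : ℝ) {y : ℝ} (hy : 0 < y) :
    Integrable (fun t : ℝ => u t * ker x y t) := by
  obtain ⟨R, hR⟩ := exists_support_Icc hcs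
  refine integrable_of_support_bound ?_ R (Real.pi * (2*y)⁻¹) fun t => ?_
  · exact (hmeas.mul (ker_measurable x y)).aestronglyMeasurable
  · by_cases ht : t ∈ Icc (-R) R
    · rw [indicator_of_mem ht, Real.norm_eq_abs, abs_mul, abs_of_nonneg (hbd t).1]
      exact mul_le_mul (hbd t).2 (abs_ker_le hy t) (abs_nonneg _) Real.pi_pos.le
    · rw [indicator_of_notMem ht, hR t ht]
      simp

lemma re_inv_sub (x t : ℝ) {y : ℝ} (hy : 0 < y) :
    (((t:ℂ) - (↑x + ↑y * Complex.I))⁻¹).re = ker x y t := by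
  rw [Complex.inv_re]
  have hre : ((t:ℂ) - (↑x + ↑y * Complex.I)).re = t - x := by simp
  have him : ((t:ℂ) - (↑x + ↑y * Complex.I)).im = -y := by simp
  rw [Complex.normSq_apply, hre, him, ker]
  ring_nf

lemma re_cauchyTransformFn (hmeas : Measurable u) (hbd : ∀ t, u t ∈ Icc (0:ℝ) Real.pi) (hcs : HasCompactSupport u) (x : ℝ) {y : ℝ} (hy : 0 < y) :
    (cauchyTransformFn u (↑x + ↑y * Complex.I)).re = Real.pi⁻¹ * ∫ t, u t * ker x y t := by
  rw [cauchyTransformFn, show ((Real.pi : ℂ))⁻¹ = ((Real.pi⁻¹ : ℝ) : ℂ) by push_cast; ring,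
    Complex.re_ofReal_mul]
  congr 1
  have hre := integral_re (𝕜 := ℂ) (integrable_cauchyFn_integrand hmeas hbd hcs x hy)
  simp only [RCLike.re_to_complex] at hre
  rw [← hre]
  refine integral_congr_ae (Eventually.of_forall fun t => ?_)
  simp only [RCLike.re_to_complex]
  rw [Complex.re_ofReal_mul, re_inv_sub x t hy]

end ReFormula


lemma ker_continuous (x : ℝ) {y : ℝ} (hy : 0 < y) : Continuous (ker x y) := by
  unfold ker
  exact Continuous.div (by fun_prop) (by fun_prop) fun t => (ker_denom_pos hy).ne'

lemma integral_ker_Ioo (x : ℝ) {y : ℝ} (hy : 0 < y) :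
    ∫ t in Ioo x (x+1), ker x y t = (1/2) * Real.log (1 + y^2) - Real.log y := by
  have hle : x ≤ x + 1 := by linarith
  have hderiv : ∀ t ∈ uIcc x (x+1),
      HasDerivAt (fun t => (1/2) * Real.log ((t-x)^2 + y^2)) (ker x y t) t := by
    intro t _
    have hg : HasDerivAt (fun t : ℝ => (t-x)^2 + y^2) (2*(t-x)) t := by
      have h1 : HasDerivAt (fun t : ℝ => (t-x)^2) (2*(t-x)^1*1) t :=
        (((hasDerivAt_id t).sub_const x)).pow 2
      simpa using h1.add_const (y^2)
    have hlog := (Real.hasDerivAt_log (ker_denom_pos (t := t) hy).ne').comp t hg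
    have := hlog.const_mul (1/2 : ℝ)
    refine this.congr_deriv ?_
    unfold ker
    field_simp
  have hint : IntervalIntegrable (ker x y) volume x (x+1) :=
    (ker_continuous x hy).intervalIntegrable x (x+1)
  have := intervalIntegral.integral_eq_sub_of_hasDerivAt hderiv hint
  rw [intervalIntegral.integral_of_le hle, integral_Ioc_eq_integral_Ioo] at this
  rw [this]
  have h1 : (x + 1 - x)^2 + y^2 = 1 + y^2 := by ring
  have h2 : (x - x)^2 + y^2 = y^2 := by ring
  rw [h1, h2, Real.log_pow]
  push_cast
  ring

lemma integrableOn_chi_ker (x : ℝ) {y : ℝ} (hy : 0 < y) :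
    IntegrableOn (fun t => (Ioo x (x+1)).indicator (fun _ => (1:ℝ)) t * ker x y t)
      (Ioo (x-1) (x+1)) volume := by
  refine Measure.integrableOn_of_bounded (M := (2*y)⁻¹) (measure_Ioo_lt_top).ne ?_ ?_
  · exact ((measurable_one.indicator measurableSet_Ioo).mul
      (ker_measurable x y)).aestronglyMeasurable
  · refine Eventually.of_forall fun t => ?_
    rw [Real.norm_eq_abs, abs_mul]
    by_cases ht : t ∈ Ioo x (x+1)
    · rw [indicator_of_mem ht]; simpa using abs_ker_le hy t
    · rw [indicator_of_notMem ht]; simpa using inv_nonneg.2 (by positivity : (0:ℝ) ≤ 2*y)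

lemma key_decomp {u : ℝ → ℝ} (hmeas : Measurable u) (hbd : ∀ t, u t ∈ Icc (0:ℝ) Real.pi)
    (hcs : HasCompactSupport u) (x : ℝ) {y : ℝ} (hy : 0 < y) :
    Real.log y + Real.pi⁻¹ * ∫ t, u t * ker x y t
      = -(Real.pi⁻¹ * ∫ t in Ioo (x-1) (x+1),
            (Real.pi * (Ioo x (x+1)).indicator (fun _ => (1:ℝ)) t - u t) * ker x y t)
        + ((1/2) * Real.log (1+y^2)
            + Real.pi⁻¹ * ∫ t in (Ioo (x-1) (x+1))ᶜ, u t * ker x y t) := by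
  have hint : Integrable (fun t => u t * ker x y t) := integrable_mul_ker hmeas hbd hcs x hy
  have hsplit := integral_add_compl (measurableSet_Ioo (a := x-1) (b := x+1)) hint
  have hA : ∫ t in Ioo (x-1) (x+1),
      (Real.pi * (Ioo x (x+1)).indicator (fun _ => (1:ℝ)) t - u t) * ker x y t
      = Real.pi * ((1/2) * Real.log (1 + y^2) - Real.log y)
        - ∫ t in Ioo (x-1) (x+1), u t * ker x y t := by
    have heq : ∀ t, (Real.pi * (Ioo x (x+1)).indicator (fun _ => (1:ℝ)) t - u t) * ker x y t
        = Real.pi * ((Ioo x (x+1)).indicator (fun _ => (1:ℝ)) t * ker x y t)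
          - u t * ker x y t := fun t => by ring
    simp only [heq]
    rw [integral_sub ((integrableOn_chi_ker x hy).const_mul Real.pi) hint.integrableOn]
    congr 1
    rw [integral_const_mul]
    congr 1
    have : ∀ t, (Ioo x (x+1)).indicator (fun _ => (1:ℝ)) t * ker x y t
        = (Ioo x (x+1)).indicator (ker x y) t := by
      intro t
      by_cases ht : t ∈ Ioo x (x+1) <;> simp [ht]
    simp only [this]
    rw [setIntegral_indicator measurableSet_Ioo,
      inter_eq_self_of_subset_right
        (fun t ht => mem_Ioo.2 ⟨by linarith [(mem_Ioo.1 ht).1], (mem_Ioo.1 ht).2⟩),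
      integral_ker_Ioo x hy]
  rw [← hsplit, hA]
  field_simp
  ring

lemma tendsto_B {u : ℝ → ℝ} (hmeas : Measurable u) (hbd : ∀ t, u t ∈ Icc (0:ℝ) Real.pi)
    (hcs : HasCompactSupport u) (x : ℝ) :
    ∃ L : ℝ, Tendsto (fun y => ∫ t in (Ioo (x-1) (x+1))ᶜ, u t * ker x y t)
      (𝓝[>] 0) (𝓝 L) := by
  obtain ⟨R, hR⟩ := exists_support_Icc hcs
  refine ⟨∫ t in (Ioo (x-1) (x+1))ᶜ, u t * (t - x)⁻¹, ?_⟩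
  apply tendsto_integral_filter_of_dominated_convergence
      (fun t => (Icc (-R) R).indicator (fun _ => Real.pi) t)
  · filter_upwards [self_mem_nhdsWithin] with y hy
    exact ((hmeas.mul (ker_measurable x y)).aestronglyMeasurable).restrict
  · filter_upwards [self_mem_nhdsWithin] with y (hy : 0 < y)
    filter_upwards [ae_restrict_mem (measurableSet_Ioo (a := x-1) (b := x+1)).compl]
      with t ht
    by_cases htR : t ∈ Icc (-R) R
    · rw [indicator_of_mem htR, Real.norm_eq_abs, abs_mul, abs_of_nonneg (hbd t).1]
      have h1 : 1 ≤ |t - x| := by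
        simp only [mem_compl_iff, mem_Ioo, not_and_or, not_lt] at ht
        rcases ht with h | h
        · rw [abs_sub_comm]; rw [abs_of_nonneg (by linarith)]; linarith
        · rw [abs_of_nonneg (by linarith)]; linarith
      have h2 : |ker x y t| ≤ 1 := by
        unfold ker
        rw [abs_div, abs_of_pos (ker_denom_pos hy)]
        rw [div_le_one (ker_denom_pos hy)]
        nlinarith [sq_abs (t - x), abs_nonneg (t - x), sq_nonneg y]
      calc u t * |ker x y t| ≤ Real.pi * 1 :=
            mul_le_mul (hbd t).2 h2 (abs_nonneg _) Real.pi_pos.le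
        _ = Real.pi := mul_one _
    · rw [indicator_of_notMem htR, hR t htR]
      simp
  · exact ((integrable_indicator_iff measurableSet_Icc).2
      (integrableOn_const measure_Icc_lt_top.ne)).restrict
  · filter_upwards [ae_restrict_mem (measurableSet_Ioo (a := x-1) (b := x+1)).compl]
      with t ht
    have htx : t - x ≠ 0 := by
      simp only [mem_compl_iff, mem_Ioo, not_and_or, not_lt] at ht
      rcases ht with h | h
      · intro hc; nlinarith [sub_eq_zero.1 hc]
      · intro hc; nlinarith [sub_eq_zero.1 hc]
    have : Tendsto (fun y : ℝ => u t * ker x y t) (𝓝 0) (𝓝 (u t * ker x 0 t)) := by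
      apply Tendsto.const_mul
      unfold ker
      apply Tendsto.div tendsto_const_nhds
      · exact (tendsto_const_nhds.add ((continuous_pow 2).tendsto 0))
      · simpa using pow_ne_zero 2 htx
    have h0 : ker x 0 t = (t - x)⁻¹ := by
      unfold ker
      rw [show (t-x)^2 + 0^2 = (t-x)^2 by ring, sq, ← div_div, div_self htx, one_div]
    rw [h0] at this
    exact this.mono_left nhdsWithin_le_nhds


lemma seq_pos (n : ℕ) : (0:ℝ) < 1/(n+1) := by positivity

lemma tendsto_seq : Tendsto (fun n : ℕ => (1:ℝ)/(n+1)) atTop (𝓝[>] 0) := by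
  rw [tendsto_nhdsWithin_iff]
  exact ⟨tendsto_one_div_add_atTop_nhds_zero_nat,
    Eventually.of_forall fun n => seq_pos n⟩

lemma w_nonneg {u : ℝ → ℝ} (hbd : ∀ t, u t ∈ Icc (0:ℝ) Real.pi) (x : ℝ) {t : ℝ}
    (ht : t ∈ Ioo (x-1) (x+1)) :
    0 ≤ (Real.pi * (Ioo x (x+1)).indicator (fun _ => (1:ℝ)) t - u t) * (t - x) := by
  by_cases h : t ∈ Ioo x (x+1)
  · rw [indicator_of_mem h]
    have := (hbd t).2
    have := (mem_Ioo.1 h).1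
    nlinarith
  · rw [indicator_of_notMem h]
    have htx : t ≤ x := by
      rcases mem_Ioo.1 ht with ⟨h1, h2⟩
      by_contra hc
      exact h (mem_Ioo.2 ⟨lt_of_not_ge hc, h2⟩)
    have := (hbd t).1
    nlinarith

lemma integrand_eq {u : ℝ → ℝ} (x t : ℝ) {y : ℝ} :
    (Real.pi * (Ioo x (x+1)).indicator (fun _ => (1:ℝ)) t - u t) * ker x y t
      = ((Real.pi * (Ioo x (x+1)).indicator (fun _ => (1:ℝ)) t - u t) * (t - x))
          / ((t-x)^2 + y^2) := by
  unfold ker; ring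

lemma integrableOn_A_integrand {u : ℝ → ℝ} (hmeas : Measurable u)
    (hbd : ∀ t, u t ∈ Icc (0:ℝ) Real.pi) (hcs : HasCompactSupport u) (x : ℝ) {y : ℝ}
    (hy : 0 < y) :
    IntegrableOn (fun t => (Real.pi * (Ioo x (x+1)).indicator (fun _ => (1:ℝ)) t - u t)
      * ker x y t) (Ioo (x-1) (x+1)) volume := by
  have heq : (fun t => (Real.pi * (Ioo x (x+1)).indicator (fun _ => (1:ℝ)) t - u t)
      * ker x y t)
      = fun t => Real.pi * ((Ioo x (x+1)).indicator (fun _ => (1:ℝ)) t * ker x y t)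
          - u t * ker x y t := by
    funext t; ring
  rw [heq]
  exact ((integrableOn_chi_ker x hy).const_mul Real.pi).sub
    (integrable_mul_ker hmeas hbd hcs x hy).integrableOn

/-- The core lemma: criterion for positivity of `c` from a boundary limit. -/
lemma core {u : ℝ → ℝ} (hmeas : Measurable u) (hbd : ∀ t, u t ∈ Icc (0:ℝ) Real.pi)
    (hcs : HasCompactSupport u) (x : ℝ) (c : ℝ≥0∞) (hc : c ≠ ⊤)
    (h : Tendsto (fun y : ℝ => y * Real.exp (Real.pi⁻¹ * ∫ t, u t * ker x y t))
      (𝓝[>] 0) (𝓝 c.toReal)) :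
    0 < c ↔
      (∫⁻ t in Ioo (x - 1) (x + 1),
        ENNReal.ofReal
          ((Real.pi * (Ioo x (x + 1)).indicator (fun _ => (1 : ℝ)) t - u t) / (t - x))) < ⊤ := by
  set S := Ioo (x-1) (x+1) with hS
  set χ : ℝ → ℝ := (Ioo x (x+1)).indicator (fun _ => (1:ℝ)) with hχ
  set A : ℝ → ℝ := fun y => ∫ t in S, (Real.pi * χ t - u t) * ker x y t with hA
  set B : ℝ → ℝ := fun y => ∫ t in Sᶜ, u t * ker x y t with hB
  set Lint : ℝ≥0∞ := ∫⁻ t in S, ENNReal.ofReal ((Real.pi * χ t - u t) / (t - x)) with hLint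
  -- Step 1: limit of exp(-(π⁻¹ A y) + h₂ y)
  obtain ⟨L, hL⟩ := tendsto_B hmeas hbd hcs x
  set h₂ : ℝ → ℝ := fun y => (1/2) * Real.log (1+y^2) + Real.pi⁻¹ * B y with hh₂
  have hexp : Tendsto (fun y => Real.exp (-(Real.pi⁻¹ * A y) + h₂ y)) (𝓝[>] 0)
      (𝓝 c.toReal) := by
    apply h.congr'
    filter_upwards [self_mem_nhdsWithin] with y (hy : 0 < y)
    rw [← key_decomp hmeas hbd hcs x hy, Real.exp_add, Real.exp_log hy]
  have hh₂lim : Tendsto h₂ (𝓝[>] 0) (𝓝 (Real.pi⁻¹ * L)) := by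
    have h1 : Tendsto (fun y : ℝ => (1/2) * Real.log (1+y^2)) (𝓝[>] 0) (𝓝 0) := by
      have : Tendsto (fun y : ℝ => (1/2) * Real.log (1+y^2)) (𝓝 0)
          (𝓝 ((1/2) * Real.log (1+0^2))) := by
        apply Tendsto.const_mul
        apply Tendsto.log
        · exact tendsto_const_nhds.add ((continuous_pow 2).tendsto 0)
        · norm_num
      simpa using this.mono_left nhdsWithin_le_nhds
    have := h1.add ((hL.const_mul (Real.pi⁻¹)))
    simpa only [zero_add] using this
  have hAexp : Tendsto (fun y => Real.exp (-(Real.pi⁻¹ * A y))) (𝓝[>] 0)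
      (𝓝 (c.toReal * Real.exp (-(Real.pi⁻¹ * L)))) := by
    have : (fun y => Real.exp (-(Real.pi⁻¹ * A y)))
        = fun y => Real.exp (-(Real.pi⁻¹ * A y) + h₂ y) * Real.exp (-(h₂ y)) := by
      funext y
      rw [← Real.exp_add]
      ring_nf
    rw [this]
    exact hexp.mul ((Real.continuous_exp.tendsto _).comp hh₂lim.neg)
  -- Step 2: MCT
  have hmct : Tendsto (fun n : ℕ => ENNReal.ofReal (A (1/(n+1)))) atTop (𝓝 Lint) := by
    have heq : ∀ n : ℕ, ENNReal.ofReal (A (1/(n+1)))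
        = ∫⁻ t in S, ENNReal.ofReal ((Real.pi * χ t - u t) * ker x (1/(n+1)) t) := by
      intro n
      apply ofReal_integral_eq_lintegral_ofReal
      · exact integrableOn_A_integrand hmeas hbd hcs x (seq_pos n)
      · filter_upwards [ae_restrict_mem (measurableSet_Ioo (a := x-1) (b := x+1))] with t ht
        rw [integrand_eq]
        exact div_nonneg (w_nonneg hbd x ht) (ker_denom_pos (seq_pos n)).le
    simp only [heq]
    apply lintegral_tendsto_of_tendsto_of_monotone
    · intro n
      exact (ENNReal.measurable_ofReal.comp
        (((measurable_const.mul ((measurable_one).indicator measurableSet_Ioo)).sub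
          hmeas).mul (ker_measurable x _))).aemeasurable
    · filter_upwards [ae_restrict_mem (measurableSet_Ioo (a := x-1) (b := x+1))] with t ht
      intro n m hnm
      apply ENNReal.ofReal_le_ofReal
      rw [integrand_eq, integrand_eq]
      apply div_le_div_of_nonneg_left (w_nonneg hbd x ht) (ker_denom_pos (seq_pos m))
      have hmn : (1:ℝ)/(m+1) ≤ 1/(n+1) := by
        apply div_le_div_of_nonneg_left one_pos.le (by positivity)
        exact_mod_cast add_le_add_left (Nat.cast_le.2 hnm) 1
      have := sq_le_sq' (by linarith [seq_pos m, seq_pos n] : -(1/((n:ℝ)+1)) ≤ 1/(m+1)) hmn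
      linarith
    · filter_upwards [ae_restrict_mem (measurableSet_Ioo (a := x-1) (b := x+1))] with t ht
      by_cases htx : t = x
      · subst htx
        have h1 : ∀ n : ℕ, (Real.pi * χ t - u t) * ker t (1/(n+1)) t = 0 := by
          intro n; unfold ker; simp
        have h2 : (Real.pi * χ t - u t) / (t - t) = 0 := by simp
        simp only [h1, h2, ENNReal.ofReal_zero]
        exact tendsto_const_nhds
      · have htx' : t - x ≠ 0 := sub_ne_zero.2 htx
        have : Tendsto (fun n : ℕ => (Real.pi * χ t - u t) * ker x (1/(n+1)) t) atTop
            (𝓝 ((Real.pi * χ t - u t) / (t - x))) := by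
          have e : ∀ n : ℕ, (Real.pi * χ t - u t) * ker x (1/(n+1)) t
              = ((Real.pi * χ t - u t) * (t - x)) / ((t-x)^2 + (1/((n:ℝ)+1))^2) :=
            fun n => integrand_eq x t
          simp only [e]
          have hd : Tendsto (fun n : ℕ => (t-x)^2 + (1/(n+1):ℝ)^2) atTop (𝓝 ((t-x)^2)) := by
            have := (tendsto_one_div_add_atTop_nhds_zero_nat (𝕜 := ℝ)).pow 2
            simpa using tendsto_const_nhds.add this
          have := (tendsto_const_nhds (x := (Real.pi * χ t - u t) * (t-x))).div hd
            (by simpa using pow_ne_zero 2 htx')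
          simp only [Pi.div_def] at this
          convert this using 2
          rw [sq]
          field_simp
        exact (ENNReal.tendsto_ofReal this)
  -- Step 3: case analysis
  rcases eq_or_ne c 0 with hc0 | hc0
  · subst hc0
    have hA0 : Tendsto (fun y => Real.exp (-(Real.pi⁻¹ * A y))) (𝓝[>] 0) (𝓝 0) := by
      simpa using hAexp
    have hlog : Tendsto (fun y => -(Real.pi⁻¹ * A y)) (𝓝[>] 0) atBot := by
      have hmem : Tendsto (fun y => Real.exp (-(Real.pi⁻¹ * A y))) (𝓝[>] 0) (𝓝[>] 0) := by
        rw [tendsto_nhdsWithin_iff]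
        exact ⟨hA0, Eventually.of_forall fun y => Real.exp_pos _⟩
      have := Real.tendsto_log_nhdsGT_zero.comp hmem
      simpa only [Function.comp_def, Real.log_exp] using this
    have hAtop : Tendsto A (𝓝[>] 0) atTop := by
      have h1 : Tendsto (fun y => Real.pi⁻¹ * A y) (𝓝[>] 0) atTop := by
        rw [← tendsto_neg_atBot_iff]
        exact hlog
      have := h1.const_mul_atTop Real.pi_pos
      simpa [← mul_assoc, mul_inv_cancel₀ Real.pi_ne_zero] using this
    have hseq : Tendsto (fun n : ℕ => A (1/(n+1))) atTop atTop := hAtop.comp tendsto_seq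
    have : Tendsto (fun n : ℕ => ENNReal.ofReal (A (1/(n+1)))) atTop (𝓝 ⊤) :=
      ENNReal.tendsto_ofReal_atTop.comp hseq
    have hLtop : Lint = ⊤ := tendsto_nhds_unique hmct this
    simp [hLtop]
  · have hcpos : 0 < c.toReal := ENNReal.toReal_pos hc0 hc
    have hlimpos : 0 < c.toReal * Real.exp (-(Real.pi⁻¹ * L)) :=
      mul_pos hcpos (Real.exp_pos _)
    have hlog : Tendsto (fun y => -(Real.pi⁻¹ * A y)) (𝓝[>] 0)
        (𝓝 (Real.log (c.toReal * Real.exp (-(Real.pi⁻¹ * L))))) := by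
      have := hAexp.log hlimpos.ne'
      simpa only [Real.log_exp] using this
    have hAfin : Tendsto A (𝓝[>] 0)
        (𝓝 (-Real.pi * Real.log (c.toReal * Real.exp (-(Real.pi⁻¹ * L))))) := by
      have := hlog.const_mul (-Real.pi)
      have heq : ∀ y, -Real.pi * -(Real.pi⁻¹ * A y) = A y := by
        intro y
        field_simp
      simp only [heq] at this
      exact this
    have hseq := hAfin.comp tendsto_seq
    have : Tendsto (fun n : ℕ => ENNReal.ofReal (A (1/(n+1)))) atTop
        (𝓝 (ENNReal.ofReal (-Real.pi * Real.log (c.toReal * Real.exp (-(Real.pi⁻¹ * L)))))) :=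
      ENNReal.tendsto_ofReal hseq
    have hLfin : Lint = ENNReal.ofReal _ := tendsto_nhds_unique hmct this
    rw [hLfin]
    simp only [ENNReal.ofReal_lt_top, iff_true]
    exact hc0.bot_lt



lemma tendsto_abs_one_add_gen (m : Measure ℝ) [IsFiniteMeasure m] (x : ℝ) (ε : ℂ)
    (hε : ‖ε‖ = 1) :
    Tendsto (fun y : ℝ => ‖((y:ℂ) *
        (1 + ε * ((Real.pi : ℂ) * cauchyTransform m (↑x + ↑y * Complex.I))))‖)
      (𝓝[>] 0) (𝓝 (m {x}).toReal) := by
  have hi := tendsto_integral_atom m x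
  have h2 : Tendsto (fun y : ℝ => (y:ℂ) *
      (1 + ε * ((Real.pi : ℂ) * cauchyTransform m (↑x + ↑y * Complex.I))))
      (𝓝[>] 0) (𝓝 (0 + ε * (((m {x}).toReal : ℂ) * Complex.I))) := by
    have hy0 : Tendsto (fun y : ℝ => (y:ℂ)) (𝓝[>] 0) (𝓝 0) := by
      have := Complex.continuous_ofReal.tendsto 0
      simpa using this.mono_left nhdsWithin_le_nhds
    refine (hy0.add (hi.const_mul ε)).congr' ?_
    filter_upwards [self_mem_nhdsWithin] with y (hy : 0 < y)
    rw [cauchyTransform, ← mul_assoc (Real.pi : ℂ), mul_inv_cancel₀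
      (Complex.ofReal_ne_zero.2 Real.pi_ne_zero), one_mul]
    have hsm : ∫ t, (y:ℂ) * ((t:ℂ) - (↑x + ↑y * Complex.I))⁻¹ ∂m
        = (y:ℂ) * ∫ t, ((t:ℂ) - (↑x + ↑y * Complex.I))⁻¹ ∂m := by
      simpa [smul_eq_mul] using
        integral_smul (μ := m) (y:ℂ) (fun t : ℝ => ((t:ℂ) - (↑x + ↑y * Complex.I))⁻¹)
    rw [hsm]
    ring
  have := (continuous_norm.tendsto _).comp h2
  simp only [Function.comp_def] at this
  convert this using 2
  rw [zero_add, norm_mul, hε, norm_mul, one_mul, Complex.norm_I, mul_one,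
    Complex.norm_real, Real.norm_eq_abs, abs_of_nonneg ENNReal.toReal_nonneg]

/-- Bridge for part (a). -/
lemma bridge_a {u : ℝ → ℝ} (μ ν : Measure ℝ) [IsFiniteMeasure μ] [IsFiniteMeasure ν]
    (hu : IsPhaseShift u μ ν) (x : ℝ) :
    Tendsto (fun y : ℝ => y * Real.exp (Real.pi⁻¹ * ∫ t, u t * ker x y t))
      (𝓝[>] 0) (𝓝 (μ {x}).toReal) := by
  obtain ⟨hmeas, hbd, hcs, heq⟩ := hu
  have h1 := tendsto_abs_one_add_gen μ x 1 (by simp)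
  refine h1.congr' ?_
  filter_upwards [self_mem_nhdsWithin] with y (hy : 0 < y)
  have hz : (0:ℝ) < (↑x + ↑y * Complex.I).im := by simp [hy]
  have := (heq _ hz).1
  rw [one_mul, this, norm_mul, Complex.norm_real, Real.norm_eq_abs, abs_of_pos hy, Complex.norm_exp,
    re_cauchyTransformFn hmeas hbd hcs x hy]

/-- Bridge for part (b). -/
lemma bridge_b {u : ℝ → ℝ} (μ ν : Measure ℝ) [IsFiniteMeasure μ] [IsFiniteMeasure ν]
    (hu : IsPhaseShift u μ ν) (x : ℝ) :
    Tendsto (fun y : ℝ => y * Real.exp (-(Real.pi⁻¹ * ∫ t, u t * ker x y t)))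
      (𝓝[>] 0) (𝓝 (ν {x}).toReal) := by
  obtain ⟨hmeas, hbd, hcs, heq⟩ := hu
  have h1 := tendsto_abs_one_add_gen ν x (-1) (by simp)
  refine h1.congr' ?_
  filter_upwards [self_mem_nhdsWithin] with y (hy : 0 < y)
  have hz : (0:ℝ) < (↑x + ↑y * Complex.I).im := by simp [hy]
  have h2 := (heq _ hz).2
  have hne : (1 : ℂ) - (Real.pi : ℂ) * cauchyTransform ν (↑x + ↑y * Complex.I) ≠ 0 := by
    intro hc
    rw [hc] at h2
    simp [Complex.exp_ne_zero] at h2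
  have h3 : ‖(1 - (Real.pi : ℂ) * cauchyTransform ν (↑x + ↑y * Complex.I))‖
      = Real.exp (-(Real.pi⁻¹ * ∫ t, u t * ker x y t)) := by
    have h4 : ‖((1 - (Real.pi : ℂ) * cauchyTransform ν (↑x + ↑y * Complex.I))⁻¹)‖
        = Real.exp (Real.pi⁻¹ * ∫ t, u t * ker x y t) := by
      rw [← h2, Complex.norm_exp, re_cauchyTransformFn hmeas hbd hcs x hy]
    rw [norm_inv] at h4
    rw [← inv_inv ‖(1 - (Real.pi : ℂ) * cauchyTransform ν (↑x + ↑y * Complex.I))‖, h4, ← Real.exp_neg]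
  rw [show (1 : ℂ) + (-1) * ((Real.pi : ℂ) * cauchyTransform ν (↑x + ↑y * Complex.I))
      = 1 - (Real.pi : ℂ) * cauchyTransform ν (↑x + ↑y * Complex.I) by ring,
    norm_mul, Complex.norm_real, Real.norm_eq_abs, abs_of_pos hy, h3]


lemma reflect_integral (u : ℝ → ℝ) (x y : ℝ) :
    ∫ t, u (-t) * ker (-x) y t = -∫ t, u t * ker x y t := by
  have hpt : ∀ t, u (-t) * ker (-x) y t = (fun s => -(u s * ker x y s)) (-t) := by
    intro t
    show u (-t) * ker (-x) y t = -(u (-t) * ker x y (-t))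
    unfold ker
    have h1 : (-t - x)^2 = (t + x)^2 := by ring
    rw [show t - -x = t + x from by ring, h1]
    field_simp
    ring
  simp only [hpt]
  rw [integral_neg_eq_self (fun s => -(u s * ker x y s)) volume, integral_neg]

lemma lintegral_reflect {u : ℝ → ℝ} (hmeas : Measurable u) (x : ℝ) :
    (∫⁻ t in Ioo (-x - 1) (-x + 1),
      ENNReal.ofReal
        ((Real.pi * (Ioo (-x) (-x + 1)).indicator (fun _ => (1:ℝ)) t - u (-t)) / (t - -x)))
    = ∫⁻ t in Ioo (x - 1) (x + 1),
      ENNReal.ofReal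
        ((Real.pi * (Ioo (x - 1) x).indicator (fun _ => (1:ℝ)) t - u t) / (x - t)) := by
  set G : ℝ → ℝ≥0∞ := fun t => ENNReal.ofReal
    ((Real.pi * (Ioo (-x) (-x + 1)).indicator (fun _ => (1:ℝ)) t - u (-t)) / (t - -x)) with hG
  set G' : ℝ → ℝ≥0∞ := fun t => ENNReal.ofReal
    ((Real.pi * (Ioo (x - 1) x).indicator (fun _ => (1:ℝ)) t - u t) / (x - t)) with hG'
  have hGmeas : Measurable G :=
    ENNReal.measurable_ofReal.comp
      (((measurable_const.mul (measurable_one.indicator measurableSet_Ioo)).sub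
        (hmeas.comp measurable_neg)).div ((measurable_id.sub measurable_const)))
  have hind : Measurable ((Ioo (-x - 1) (-x + 1)).indicator G) :=
    hGmeas.indicator measurableSet_Ioo
  have h2 := (Measure.measurePreserving_neg (volume : Measure ℝ)).lintegral_comp hind
  have h3 : ∀ t, (Ioo (-x - 1) (-x + 1)).indicator G (-t)
      = (Ioo (x - 1) (x + 1)).indicator G' t := by
    intro t
    by_cases ht : t ∈ Ioo (x - 1) (x + 1)
    · have ht' : -t ∈ Ioo (-x - 1) (-x + 1) := by
        rcases mem_Ioo.1 ht with ⟨ha, hb⟩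
        exact mem_Ioo.2 ⟨by linarith, by linarith⟩
      rw [indicator_of_mem ht', indicator_of_mem ht]
      show ENNReal.ofReal
          ((Real.pi * (Ioo (-x) (-x + 1)).indicator (fun _ => (1:ℝ)) (-t) - u (-(-t)))
            / (-t - -x))
        = ENNReal.ofReal
          ((Real.pi * (Ioo (x - 1) x).indicator (fun _ => (1:ℝ)) t - u t) / (x - t))
      have hχ : (Ioo (-x) (-x + 1)).indicator (fun _ => (1:ℝ)) (-t)
          = (Ioo (x - 1) x).indicator (fun _ => (1:ℝ)) t := by
        by_cases h : t ∈ Ioo (x - 1) x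
        · rcases mem_Ioo.1 h with ⟨ha, hb⟩
          rw [indicator_of_mem (mem_Ioo.2 ⟨by linarith, by linarith⟩ : -t ∈ Ioo (-x) (-x+1)),
            indicator_of_mem h]
        · have h' : -t ∉ Ioo (-x) (-x + 1) := by
            intro hc
            rcases mem_Ioo.1 hc with ⟨ha, hb⟩
            exact h (mem_Ioo.2 ⟨by linarith, by linarith⟩)
          rw [indicator_of_notMem h', indicator_of_notMem h]
      rw [hχ, neg_neg, show -t - -x = x - t from by ring]
    · have ht' : -t ∉ Ioo (-x - 1) (-x + 1) := by
        intro hc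
        rcases mem_Ioo.1 hc with ⟨ha, hb⟩
        exact ht (mem_Ioo.2 ⟨by linarith, by linarith⟩)
      rw [indicator_of_notMem ht', indicator_of_notMem ht]
  calc ∫⁻ t in Ioo (-x - 1) (-x + 1), G t
      = ∫⁻ t, (Ioo (-x - 1) (-x + 1)).indicator G t :=
        (lintegral_indicator measurableSet_Ioo G).symm
    _ = ∫⁻ t, (Ioo (-x - 1) (-x + 1)).indicator G (-t) := h2.symm
    _ = ∫⁻ t, (Ioo (x - 1) (x + 1)).indicator G' t := by simp only [h3]
    _ = ∫⁻ t in Ioo (x - 1) (x + 1), G' t := lintegral_indicator measurableSet_Ioo G'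

end Stmt9Aux

/-- Lemma 3.8 [M-P]. If `u` is the phase shift of `(μ, ν)`, then
(a) `μ({x}) > 0` iff `∫_{x−1}^{x+1} (π·χ_(x,x+1)(y) − u(y))/(y − x) dy < ∞`,
(b) `ν({x}) > 0` iff `∫_{x−1}^{x+1} (π·χ_(x−1,x)(y) − u(y))/(x − y) dy < ∞`;
in both cases the integrand is nonnegative (a.e.), so the integrals are taken in the
extended sense (`∫⁻` of the nonnegative integrand). -/
theorem stmt9 (μ ν : Measure ℝ) [IsFiniteMeasure μ] [IsFiniteMeasure ν]
    (hμsupp : ∃ R : ℝ, μ (Icc (-R) R)ᶜ = 0) (hνsupp : ∃ R : ℝ, ν (Icc (-R) R)ᶜ = 0)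
    (u : ℝ → ℝ) (hu : IsPhaseShift u μ ν) (x : ℝ) :
    (0 < μ {x} ↔
      (∫⁻ y in Ioo (x - 1) (x + 1),
        ENNReal.ofReal
          ((Real.pi * (Ioo x (x + 1)).indicator (fun _ => (1 : ℝ)) y - u y) / (y - x))) < ⊤) ∧
    (0 < ν {x} ↔
      (∫⁻ y in Ioo (x - 1) (x + 1),
        ENNReal.ofReal
          ((Real.pi * (Ioo (x - 1) x).indicator (fun _ => (1 : ℝ)) y - u y) / (x - y))) < ⊤) := by
  obtain ⟨hmeas, hbd, hcs, -⟩ := id hu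
  constructor
  · have ha := Stmt9Aux.core hmeas hbd hcs x (μ {x}) (measure_ne_top μ _)
      (Stmt9Aux.bridge_a μ ν hu x)
    exact ha
  · have hmeas' : Measurable (fun t => u (-t)) := hmeas.comp measurable_neg
    have hbd' : ∀ t, u (-t) ∈ Icc (0:ℝ) Real.pi := fun t => hbd (-t)
    have hcs' : HasCompactSupport (fun t => u (-t)) := by
      have := hcs.comp_homeomorph (Homeomorph.neg ℝ)
      exact this
    have hbridge : Tendsto (fun y : ℝ =>
        y * Real.exp (Real.pi⁻¹ * ∫ t, u (-t) * Stmt9Aux.ker (-x) y t))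
        (𝓝[>] 0) (𝓝 (ν {x}).toReal) := by
      refine (Stmt9Aux.bridge_b μ ν hu x).congr' ?_
      filter_upwards [self_mem_nhdsWithin] with y (hy : 0 < y)
      rw [Stmt9Aux.reflect_integral u x y, mul_neg]
    have hb := Stmt9Aux.core hmeas' hbd' hcs' (-x) (ν {x}) (measure_ne_top ν _) hbridge
    rwa [Stmt9Aux.lintegral_reflect hmeas x] at hb
end

section
/- Let (a_n) and (b_n) be injective sequences of real numbers contained in a bounded set, with {a_n : n} ∩ {b_n : n} = ∅, let α_n, β_n > 0 with Σα_n < ∞ and Σβ_n < ∞, and set μ = Σ_n α_n δ_{a_n} and ν = Σ_n β_n δ_{b_n}. If the multiplication operators M_μ and M_ν are equivalent up to a rank one perturbation, then the sets {a_n : n} and {b_n : n} are well-mixed. -/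
open MeasureTheory Set
open ENNReal NNReal

/-- Two bounded operators on (possibly different) complex Hilbert spaces are unitarily
equivalent. -/
def UnitarilyEquiv {H₁ : Type*} [NormedAddCommGroup H₁] [InnerProductSpace ℂ H₁]
    {H₂ : Type*} [NormedAddCommGroup H₂] [InnerProductSpace ℂ H₂]
    (A : H₁ →L[ℂ] H₁) (B : H₂ →L[ℂ] H₂) : Prop :=
  ∃ U : H₁ ≃ₗᵢ[ℂ] H₂, ∀ x, U (A x) = B (U x)

/-- Two bounded operators `A`, `B` are equivalent up to a rank one perturbation: there
are operators `A'`, `B'` on one Hilbert space, unitarily equivalent to `A` resp. `B`,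
with `A' − B'` of rank exactly one. -/
def EquivUpToRankOne {H₁ : Type*} [NormedAddCommGroup H₁] [InnerProductSpace ℂ H₁]
    {H₂ : Type*} [NormedAddCommGroup H₂] [InnerProductSpace ℂ H₂]
    (A : H₁ →L[ℂ] H₁) (B : H₂ →L[ℂ] H₂) : Prop :=
  ∃ A' B' : H₁ →L[ℂ] H₁, UnitarilyEquiv A A' ∧ UnitarilyEquiv B B' ∧
    Module.finrank ℂ (LinearMap.range ((A' - B' : H₁ →L[ℂ] H₁) : H₁ →ₗ[ℂ] H₁)) = 1

/-- Two (disjoint) sets of reals are well-mixed: strictly between any two points of one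
set, and outside the closed interval they bound, there is a point of the other set. -/
def WellMixed (𝒜 ℬ : Set ℝ) : Prop :=
  (∀ x ∈ 𝒜, ∀ y ∈ 𝒜, x < y →
    (Ioo x y ∩ ℬ).Nonempty ∧ ((Icc x y)ᶜ ∩ ℬ).Nonempty) ∧
  (∀ x ∈ ℬ, ∀ y ∈ ℬ, x < y →
    (Ioo x y ∩ 𝒜).Nonempty ∧ ((Icc x y)ᶜ ∩ 𝒜).Nonempty)

lemma aux_ae_of_forall {b : ℕ → ℝ} {β : ℕ → NNReal} {ν : Measure ℝ}
    (hν : ν = Measure.sum fun n => ((β n : ENNReal) • Measure.dirac (b n)))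
    {P : ℝ → Prop} (hP : ∀ n, P (b n)) : ∀ᵐ t ∂ν, P t := by
  subst hν
  rw [Measure.ae_sum_iff]
  intro n
  apply Measure.ae_smul_measure
  rw [Filter.Eventually, ae_dirac_eq]
  exact hP n

lemma aux_meas_singleton {a : ℕ → ℝ} (hainj : Function.Injective a) {α : ℕ → NNReal}
    {μ : Measure ℝ}
    (hμ : μ = Measure.sum fun n => ((α n : ENNReal) • Measure.dirac (a n))) (i : ℕ) :
    μ {a i} = α i := by
  subst hμ
  rw [Measure.sum_apply _ (measurableSet_singleton _)]
  rw [tsum_eq_single i]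
  · simp [Measure.dirac_apply' _ (measurableSet_singleton _)]
  · intro n hn
    have : a n ≠ a i := fun hc => hn (hainj hc)
    simp [Measure.dirac_apply' _ (measurableSet_singleton _), this]

lemma aux_prop_of_ae {μ : Measure ℝ} {x : ℝ} (hx : μ {x} ≠ 0) {P : ℝ → Prop}
    (h : ∀ᵐ t ∂μ, P t) : P x := by
  by_contra hP
  exact hx (measure_mono_null (Set.singleton_subset_iff.2 hP) (ae_iff.1 h))

lemma aux_norm_eq_of_ae {μ : Measure ℝ} (f h : Lp ℂ 2 μ) (r : ℝ) (hr : 0 ≤ r)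
    (hae : ∀ᵐ t ∂μ, ‖h t‖ = r * ‖f t‖) : ‖h‖ = r * ‖f‖ := by
  have h1 : eLpNorm h 2 μ = eLpNorm ((r : ℂ) • f) 2 μ := by
    rw [eLpNorm_congr_ae (Lp.coeFn_smul (r:ℂ) f)]
    apply eLpNorm_congr_norm_ae
    filter_upwards [hae] with t h1
    rw [h1]
    simp [norm_smul, Complex.norm_real, abs_of_nonneg hr]
  have h2 : ‖h‖ = ‖(r:ℂ) • f‖ := by
    rw [Lp.norm_def, Lp.norm_def, h1]
  rw [h2, norm_smul, Complex.norm_real, Real.norm_eq_abs, abs_of_nonneg hr]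

lemma aux_lint_eq {ν : Measure ℝ} (g : Lp ℂ 2 ν) :
    eLpNorm g 2 ν = (∫⁻ t, (‖g t‖₊ : ℝ≥0∞) ^ (2:ℕ) ∂ν) ^ (1/2 : ℝ) := by
  rw [eLpNorm_eq_lintegral_rpow_enorm_toReal (by norm_num) (by norm_num)]
  norm_num [enorm_eq_nnnorm]

lemma aux_lint_ne_top {ν : Measure ℝ} (g : Lp ℂ 2 ν) :
    ∫⁻ t, (‖g t‖₊ : ℝ≥0∞) ^ (2:ℕ) ∂ν ≠ ⊤ := by
  intro hc
  have h := Lp.eLpNorm_ne_top g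
  rw [aux_lint_eq g, hc] at h
  simp [ENNReal.top_rpow_of_pos] at h

lemma aux_lint_congr {ν : Measure ℝ} (g h' : Lp ℂ 2 ν) (c : ℝ)
    (hh' : ∀ᵐ t ∂ν, h' t = ((t : ℂ) - (c : ℂ)) * g t) :
    ∫⁻ t, (‖h' t‖₊ : ℝ≥0∞) ^ (2:ℕ) ∂ν
      = ∫⁻ t, ((‖t - c‖₊ : ℝ≥0∞)) ^ (2:ℕ) * ((‖g t‖₊ : ℝ≥0∞)) ^ (2:ℕ) ∂ν := by
  apply lintegral_congr_ae
  filter_upwards [hh'] with t ht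
  rw [ht]
  rw [show ((t:ℂ) - (c:ℂ)) = ((t - c : ℝ) : ℂ) by push_cast; ring]
  rw [nnnorm_mul, Complex.nnnorm_real]
  push_cast
  ring

lemma aux_vanish {ν : Measure ℝ} (g h' : Lp ℂ 2 ν) (c r : ℝ)
    (hh' : ∀ᵐ t ∂ν, h' t = ((t : ℂ) - (c : ℂ)) * g t)
    (hnorm : ‖h'‖ = r * ‖g‖)
    (hcase : (∀ᵐ t ∂ν, r < |t - c|) ∨ (∀ᵐ t ∂ν, |t - c| < r)) : g = 0 := by
  by_contra hg
  have hgpos : 0 < ‖g‖ := norm_pos_iff.mpr hg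
  have hr : 0 ≤ r := by nlinarith [norm_nonneg h', hnorm]
  have hsn : eLpNorm h' 2 ν = eLpNorm ((r:ℂ) • g) 2 ν := by
    have hn2 : ‖h'‖ = ‖(r:ℂ) • g‖ := by
      rw [norm_smul, Complex.norm_real, Real.norm_eq_abs, abs_of_nonneg hr]; exact hnorm
    rw [Lp.norm_def, Lp.norm_def] at hn2
    exact (ENNReal.toReal_eq_toReal_iff' (Lp.eLpNorm_ne_top _) (Lp.eLpNorm_ne_top _)).1 hn2
  have hI : ∫⁻ t, (‖h' t‖₊ : ℝ≥0∞)^(2:ℕ) ∂ν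
      = ∫⁻ t, (‖((r:ℂ) • g : Lp ℂ 2 ν) t‖₊ : ℝ≥0∞)^(2:ℕ) ∂ν := by
    have h3 := hsn
    rw [aux_lint_eq, aux_lint_eq] at h3
    exact ENNReal.rpow_left_injective (by norm_num) h3
  set N : ℝ → ℝ≥0∞ := fun t => (‖g t‖₊ : ℝ≥0∞)^(2:ℕ) with hN
  set q : ℝ → ℝ≥0∞ := fun t => (‖t - c‖₊ : ℝ≥0∞)^(2:ℕ) with hq
  set e : ℝ≥0∞ := (‖r‖₊ : ℝ≥0∞)^(2:ℕ) with he
  have hI1 : ∫⁻ t, q t * N t ∂ν = ∫⁻ t, e * N t ∂ν := by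
    rw [← aux_lint_congr g h' c hh', hI]
    apply lintegral_congr_ae
    filter_upwards [Lp.coeFn_smul (r:ℂ) g] with t ht
    rw [ht, Pi.smul_apply, smul_eq_mul, nnnorm_mul, Complex.nnnorm_real]
    push_cast
    ring
  have hNmeas : AEMeasurable N ν := ((Lp.aestronglyMeasurable g).enorm).pow_const 2
  have hqmeas : Measurable q :=
    ((measurable_id.sub measurable_const).nnnorm.coe_nnreal_ennreal).pow_const 2
  have hfinN : ∫⁻ t, N t ∂ν ≠ ⊤ := aux_lint_ne_top g
  have hfine : ∫⁻ t, e * N t ∂ν ≠ ⊤ := by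
    rw [lintegral_const_mul' _ _ (by simp [he, ← ENNReal.coe_pow] : e ≠ ⊤)]
    exact ENNReal.mul_ne_top (by simp [he, ← ENNReal.coe_pow]) hfinN
  -- strict pointwise comparison
  have key : ∀ᵐ t ∂ν, N t = 0 := by
    rcases hcase with hc1 | hc2
    · -- e < q t a.e., and ∫ qN = ∫ eN
      have hle : ∀ᵐ t ∂ν, e * N t ≤ q t * N t := by
        filter_upwards [hc1] with t ht
        have : (‖r‖₊ : ℝ≥0∞) ≤ (‖t - c‖₊ : ℝ≥0∞) := by
          rw [ENNReal.coe_le_coe, ← NNReal.coe_le_coe, coe_nnnorm, coe_nnnorm,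
            Real.norm_eq_abs, Real.norm_eq_abs, abs_of_nonneg hr]
          exact ht.le
        exact mul_le_mul_left (pow_le_pow_left' this 2) _
      have hsub : ∫⁻ t, (q t * N t - e * N t) ∂ν = 0 := by
        rw [lintegral_sub' (f := fun t => q t * N t) (g := fun t => e * N t) (aemeasurable_const.mul hNmeas) hfine hle, hI1, tsub_self]
      have h0 := (lintegral_eq_zero_iff'
        ((hqmeas.aemeasurable.mul hNmeas).sub (aemeasurable_const.mul hNmeas))).1 hsub
      filter_upwards [h0, hc1] with t ht hlt
      by_contra hN0
      have hNtop : N t ≠ ⊤ := by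
        simp [hN, ← ENNReal.coe_pow]
      have hqe : e < q t := by
        apply ENNReal.pow_lt_pow_left (two_ne_zero)
        rw [ENNReal.coe_lt_coe, ← NNReal.coe_lt_coe, coe_nnnorm, coe_nnnorm,
          Real.norm_eq_abs, Real.norm_eq_abs, abs_of_nonneg hr]
        exact hlt
      have : q t * N t ≤ e * N t := tsub_eq_zero_iff_le.1 ht
      exact absurd ((ENNReal.mul_le_mul_iff_left hN0 hNtop).1 this) (not_le.2 hqe)
    · have hle : ∀ᵐ t ∂ν, q t * N t ≤ e * N t := by
        filter_upwards [hc2] with t ht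
        have : (‖t - c‖₊ : ℝ≥0∞) ≤ (‖r‖₊ : ℝ≥0∞) := by
          rw [ENNReal.coe_le_coe, ← NNReal.coe_le_coe, coe_nnnorm, coe_nnnorm,
            Real.norm_eq_abs, Real.norm_eq_abs, abs_of_nonneg hr]
          exact ht.le
        exact mul_le_mul_left (pow_le_pow_left' this 2) _
      have hfinq : ∫⁻ t, q t * N t ∂ν ≠ ⊤ := by rw [hI1]; exact hfine
      have hsub : ∫⁻ t, (e * N t - q t * N t) ∂ν = 0 := by
        rw [lintegral_sub' (f := fun t => e * N t) (g := fun t => q t * N t) (hqmeas.aemeasurable.mul hNmeas) hfinq hle, hI1, tsub_self]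
      have h0 := (lintegral_eq_zero_iff'
        ((aemeasurable_const.mul hNmeas).sub (hqmeas.aemeasurable.mul hNmeas))).1 hsub
      filter_upwards [h0, hc2] with t ht hlt
      by_contra hN0
      have hNtop : N t ≠ ⊤ := by
        simp [hN, ← ENNReal.coe_pow]
      have hqe : q t < e := by
        apply ENNReal.pow_lt_pow_left (two_ne_zero)
        rw [ENNReal.coe_lt_coe, ← NNReal.coe_lt_coe, coe_nnnorm, coe_nnnorm,
          Real.norm_eq_abs, Real.norm_eq_abs, abs_of_nonneg hr]
        exact hlt
      have : e * N t ≤ q t * N t := tsub_eq_zero_iff_le.1 ht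
      exact absurd ((ENNReal.mul_le_mul_iff_left hN0 hNtop).1 this) (not_le.2 hqe)
  apply hg
  rw [Lp.eq_zero_iff_ae_eq_zero]
  filter_upwards [key] with t ht
  simpa [hN, pow_eq_zero_iff] using ht

lemma aux_gt {x y z : ℝ} (h1 : ¬(x < z ∧ z < y)) (h2 : z ≠ x) (h3 : z ≠ y) :
    (y - x)/2 < |z - (x+y)/2| := by
  rcases lt_trichotomy z x with h|h|h
  · rw [lt_abs]; right; linarith
  · exact absurd h h2
  · rcases lt_trichotomy z y with h'|h'|h'
    · exact absurd ⟨h, h'⟩ h1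
    · exact absurd h' h3
    · rw [lt_abs]; left; linarith

lemma aux_lt {x y z : ℝ} (h1 : x ≤ z) (h1' : z ≤ y) (h2 : z ≠ x) (h3 : z ≠ y) :
    |z - (x+y)/2| < (y - x)/2 := by
  rw [abs_lt]
  constructor
  · rcases h1.lt_or_eq with h|h
    · linarith
    · exact absurd h.symm h2
  · rcases h1'.lt_or_eq with h|h
    · linarith
    · exact absurd h h3


lemma aux_core {H : Type*} [NormedAddCommGroup H] [InnerProductSpace ℂ H]
    {μ ν : Measure ℝ}
    (Mμ : Lp ℂ 2 μ →L[ℂ] Lp ℂ 2 μ)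
    (hMμ : ∀ f : Lp ℂ 2 μ, ∀ᵐ t ∂μ, (Mμ f) t = (t : ℂ) * f t)
    (Mν : Lp ℂ 2 ν →L[ℂ] Lp ℂ 2 ν)
    (hMν : ∀ f : Lp ℂ 2 ν, ∀ᵐ t ∂ν, (Mν f) t = (t : ℂ) * f t)
    (A B : H →L[ℂ] H)
    (U : Lp ℂ 2 μ ≃ₗᵢ[ℂ] H) (hU : ∀ x, U (Mμ x) = A (U x))
    (V : Lp ℂ 2 ν ≃ₗᵢ[ℂ] H) (hV : ∀ x, V (Mν x) = B (V x))
    (hrank : Module.finrank ℂ (LinearMap.range ((A - B : H →L[ℂ] H) : H →ₗ[ℂ] H)) = 1)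
    (x y : ℝ) (hxy : x < y) (hμx : μ {x} ≠ 0) (hμx' : μ {x} ≠ ⊤)
    (hμy : μ {y} ≠ 0) (hμy' : μ {y} ≠ ⊤)
    (hcase : (∀ᵐ t ∂ν, (y - x)/2 < |t - (x+y)/2|) ∨ (∀ᵐ t ∂ν, |t - (x+y)/2| < (y-x)/2)) :
    False := by
  set c : ℝ := (x+y)/2 with hc
  set r : ℝ := (y-x)/2 with hrr
  have hrpos : 0 < r := by rw [hrr]; linarith
  have hxne : x ≠ y := ne_of_lt hxy
  set e₁ : Lp ℂ 2 μ := indicatorConstLp 2 (measurableSet_singleton x) hμx' (1:ℂ) with he₁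
  set e₂ : Lp ℂ 2 μ := indicatorConstLp 2 (measurableSet_singleton y) hμy' (1:ℂ) with he₂
  set w₁ : H := U e₁ with hw₁
  set w₂ : H := U e₂ with hw₂
  -- find nontrivial kernel combination
  obtain ⟨γ₁, γ₂, hγ, hker⟩ : ∃ γ₁ γ₂ : ℂ, ¬(γ₁ = 0 ∧ γ₂ = 0) ∧
      (A - B) (γ₁ • w₁ + γ₂ • w₂) = 0 := by
    obtain ⟨v₀, hv₀, hspan⟩ := (finrank_eq_one_iff').1 hrank
    obtain ⟨s₁, hs₁⟩ := hspan ⟨(A - B) w₁, ⟨w₁, rfl⟩⟩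
    obtain ⟨s₂, hs₂⟩ := hspan ⟨(A - B) w₂, ⟨w₂, rfl⟩⟩
    have hs₁' : s₁ • (v₀ : H) = (A - B) w₁ := by
      have := congrArg Subtype.val hs₁; simpa using this
    have hs₂' : s₂ • (v₀ : H) = (A - B) w₂ := by
      have := congrArg Subtype.val hs₂; simpa using this
    by_cases hs : s₁ = 0
    · exact ⟨1, 0, by simp, by
        simp only [one_smul, zero_smul, add_zero]
        rw [← hs₁', hs, zero_smul]⟩
    · refine ⟨s₂, -s₁, fun hc => hs (neg_eq_zero.mp hc.2), ?_⟩
      rw [map_add, _root_.map_smul, _root_.map_smul, ← hs₁', ← hs₂', smul_smul, smul_smul]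
      rw [← add_smul, show s₂ * s₁ + -s₁ * s₂ = 0 by ring, zero_smul]
  set f : Lp ℂ 2 μ := γ₁ • e₁ + γ₂ • e₂ with hf
  have hfcoe : ⇑f =ᵐ[μ] fun t => γ₁ • ({x} : Set ℝ).indicator (fun _ => (1:ℂ)) t
      + γ₂ • ({y} : Set ℝ).indicator (fun _ => (1:ℂ)) t := by
    filter_upwards [Lp.coeFn_add (γ₁ • e₁) (γ₂ • e₂), Lp.coeFn_smul γ₁ e₁,
      Lp.coeFn_smul γ₂ e₂, indicatorConstLp_coeFn (p := 2) (μ := μ)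
        (hs := measurableSet_singleton x) (hμs := hμx') (c := (1:ℂ)),
      indicatorConstLp_coeFn (p := 2) (μ := μ)
        (hs := measurableSet_singleton y) (hμs := hμy') (c := (1:ℂ))]
      with t h1 h2 h3 h4 h5
    rw [hf, h1, Pi.add_apply, h2, h3, Pi.smul_apply, Pi.smul_apply, he₁, he₂, h4, h5]
  have hf0 : f ≠ 0 := by
    intro h0
    have hz := Lp.eq_zero_iff_ae_eq_zero.mp h0
    have hae : ∀ᵐ t ∂μ, γ₁ • ({x} : Set ℝ).indicator (fun _ => (1:ℂ)) t
        + γ₂ • ({y} : Set ℝ).indicator (fun _ => (1:ℂ)) t = 0 := by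
      filter_upwards [hfcoe, hz] with t h1 h2
      rw [← h1, h2, Pi.zero_apply]
    apply hγ
    constructor
    · have := aux_prop_of_ae hμx hae
      simpa [Set.indicator_of_mem, Set.indicator_of_notMem, hxne] using this
    · have := aux_prop_of_ae hμy hae
      simpa [Set.indicator_of_mem, Set.indicator_of_notMem, (Ne.symm hxne)] using this
  set v : H := U f with hv
  have hveq : v = γ₁ • w₁ + γ₂ • w₂ := by
    rw [hv, hf, map_add, _root_.map_smul, _root_.map_smul, hw₁, hw₂]
  have hAB : A v = B v := by
    have : (A - B) v = 0 := by rw [hveq]; exact hker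
    rw [ContinuousLinearMap.sub_apply] at this
    exact sub_eq_zero.1 this
  set h : Lp ℂ 2 μ := Mμ f - (c : ℂ) • f with hh
  have hhcoe : ⇑h =ᵐ[μ] fun t => ((t : ℂ) - (c : ℂ)) * f t := by
    filter_upwards [Lp.coeFn_sub (Mμ f) ((c:ℂ) • f), Lp.coeFn_smul (c:ℂ) f, hMμ f]
      with t h1 h2 h3
    rw [hh, h1, Pi.sub_apply, h2, h3, Pi.smul_apply, smul_eq_mul]
    ring
  have hnorm_ae : ∀ᵐ t ∂μ, ‖h t‖ = r * ‖f t‖ := by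
    filter_upwards [hhcoe, hfcoe] with t h1 h2
    rw [h1]
    rw [show ((t:ℂ) - (c:ℂ)) = ((t - c : ℝ) : ℂ) by push_cast; ring]
    rw [norm_mul, Complex.norm_real, Real.norm_eq_abs]
    by_cases htx : t = x
    · have : |t - c| = r := by rw [htx, hc, hrr]; rw [abs_of_nonpos (by linarith)]; ring
      rw [this]
    · by_cases hty : t = y
      · have : |t - c| = r := by rw [hty, hc, hrr]; rw [abs_of_nonneg (by linarith)]; ring
        rw [this]
      · have : f t = 0 := by
          rw [h2, Set.indicator_of_notMem (by simpa using htx),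
            Set.indicator_of_notMem (by simpa using hty)]
          simp
        rw [this]
        simp
  have hnormh : ‖h‖ = r * ‖f‖ := aux_norm_eq_of_ae f h r hrpos.le hnorm_ae
  set g : Lp ℂ 2 ν := V.symm v with hg
  have hVg : V g = v := by rw [hg]; exact V.apply_symm_apply v
  set h' : Lp ℂ 2 ν := Mν g - (c : ℂ) • g with hh'
  have hh'coe : ⇑h' =ᵐ[ν] fun t => ((t : ℂ) - (c : ℂ)) * g t := by
    filter_upwards [Lp.coeFn_sub (Mν g) ((c:ℂ) • g), Lp.coeFn_smul (c:ℂ) g, hMν g]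
      with t h1 h2 h3
    rw [hh', h1, Pi.sub_apply, h2, h3, Pi.smul_apply, smul_eq_mul]
    ring
  have hnorm' : ‖h'‖ = r * ‖g‖ := by
    have e1 : ‖h'‖ = ‖V h'‖ := (V.norm_map h').symm
    have e2 : V h' = B v - (c:ℂ) • v := by
      rw [hh', map_sub, _root_.map_smul, hVg, hV g, hVg]
    have e3 : A v - (c:ℂ) • v = U h := by
      rw [hh, map_sub, _root_.map_smul, hv, hU f]
    have e4 : ‖g‖ = ‖f‖ := by
      rw [hg, LinearIsometryEquiv.norm_map, hv, LinearIsometryEquiv.norm_map]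
    rw [e1, e2, ← hAB, e3, LinearIsometryEquiv.norm_map, hnormh, e4]
  have hgz : g = 0 := by
    apply aux_vanish g h' c r hh'coe hnorm'
    rcases hcase with h1 | h1
    · left; rw [hc, hrr]; exact h1
    · right; rw [hc, hrr]; exact h1
  apply hf0
  have : v = 0 := by rw [← hVg, hgz, map_zero]
  rw [hv] at this
  simpa using congrArg U.symm this


/-- If `μ = Σ αₙ δ_{aₙ}` and `ν = Σ βₙ δ_{bₙ}` (with `aₙ`, `bₙ` injective bounded
sequences with disjoint ranges, `αₙ, βₙ > 0` summable) and the multiplication operators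
`M_μ` on `L²(μ)` and `M_ν` on `L²(ν)` (characterized by `(M f)(t) = t·f(t)` a.e.) are
equivalent up to a rank one perturbation, then `{aₙ}` and `{bₙ}` are well-mixed. -/
theorem stmt16 (a b : ℕ → ℝ)
    (hainj : Function.Injective a) (hbinj : Function.Injective b)
    (hbdd : ∃ R : ℝ, (∀ n, |a n| ≤ R) ∧ (∀ n, |b n| ≤ R))
    (hdisj : Disjoint (Set.range a) (Set.range b))
    (α β : ℕ → NNReal) (hα : ∀ n, 0 < α n) (hβ : ∀ n, 0 < β n)
    (hαs : Summable α) (hβs : Summable β)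
    (μ ν : Measure ℝ)
    (hμ : μ = Measure.sum fun n => ((α n : ENNReal) • Measure.dirac (a n)))
    (hν : ν = Measure.sum fun n => ((β n : ENNReal) • Measure.dirac (b n)))
    (Mμ : Lp ℂ 2 μ →L[ℂ] Lp ℂ 2 μ)
    (hMμ : ∀ f : Lp ℂ 2 μ, ∀ᵐ (t : ℝ) ∂μ, (Mμ f) t = (t : ℂ) * f t)
    (Mν : Lp ℂ 2 ν →L[ℂ] Lp ℂ 2 ν)
    (hMν : ∀ f : Lp ℂ 2 ν, ∀ᵐ (t : ℝ) ∂ν, (Mν f) t = (t : ℂ) * f t)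
    (h : EquivUpToRankOne Mμ Mν) :
    WellMixed (Set.range a) (Set.range b) := by
  obtain ⟨A', B', ⟨Uu, hUu⟩, ⟨Vv, hVv⟩, hrank⟩ := h
  have hμa : ∀ i, μ {a i} = α i := aux_meas_singleton hainj hμ
  have hνb : ∀ i, ν {b i} = β i := aux_meas_singleton hbinj hν
  have hμa0 : ∀ i, μ {a i} ≠ 0 := fun i => by
    rw [hμa i]; exact_mod_cast (hα i).ne'
  have hμa' : ∀ i, μ {a i} ≠ ⊤ := fun i => by rw [hμa i]; exact ENNReal.coe_ne_top
  have hνb0 : ∀ i, ν {b i} ≠ 0 := fun i => by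
    rw [hνb i]; exact_mod_cast (hβ i).ne'
  have hνb' : ∀ i, ν {b i} ≠ ⊤ := fun i => by rw [hνb i]; exact ENNReal.coe_ne_top
  have hab : ∀ i j, a i ≠ b j := fun i j hc =>
    Set.disjoint_left.mp hdisj ⟨i, rfl⟩ ⟨j, hc.symm⟩
  have hrank' : Module.finrank ℂ (LinearMap.range ((B' - A' : Lp ℂ 2 μ →L[ℂ] Lp ℂ 2 μ) : Lp ℂ 2 μ →ₗ[ℂ] Lp ℂ 2 μ)) = 1 := by
    rw [show LinearMap.range ((B' - A' : Lp ℂ 2 μ →L[ℂ] Lp ℂ 2 μ) : Lp ℂ 2 μ →ₗ[ℂ] Lp ℂ 2 μ) = LinearMap.range ((A' - B' : Lp ℂ 2 μ →L[ℂ] Lp ℂ 2 μ) : Lp ℂ 2 μ →ₗ[ℂ] Lp ℂ 2 μ) from ?_]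
    · exact hrank
    · ext z
      simp only [LinearMap.mem_range]
      constructor <;> rintro ⟨w, rfl⟩ <;> refine ⟨-w, ?_⟩ <;>
        simp [ContinuousLinearMap.sub_apply] <;> abel
  constructor
  · rintro x ⟨i, rfl⟩ y ⟨j, rfl⟩ hxy
    constructor
    · by_contra hne
      rw [Set.not_nonempty_iff_eq_empty] at hne
      have hno : ∀ n, (a j - a i)/2 < |b n - (a i + a j)/2| := by
        intro n
        have h1 : b n ∉ Ioo (a i) (a j) :=
          fun hc => (Set.eq_empty_iff_forall_notMem.1 hne (b n)) ⟨hc, ⟨n, rfl⟩⟩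
        have h2 : b n ≠ a i := fun hc => hab i n hc.symm
        have h3 : b n ≠ a j := fun hc => hab j n hc.symm
        exact aux_gt (by rwa [Set.mem_Ioo] at h1) h2 h3
      exact absurd (aux_core Mμ hMμ Mν hMν A' B' Uu hUu Vv hVv hrank (a i) (a j) hxy
        (hμa0 i) (hμa' i) (hμa0 j) (hμa' j)
        (Or.inl (aux_ae_of_forall hν hno))) not_false
    · by_contra hne
      rw [Set.not_nonempty_iff_eq_empty] at hne
      have hno : ∀ n, |b n - (a i + a j)/2| < (a j - a i)/2 := by
        intro n
        have h1 : b n ∈ Icc (a i) (a j) := by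
          by_contra hc
          exact (Set.eq_empty_iff_forall_notMem.1 hne (b n)) ⟨hc, ⟨n, rfl⟩⟩
        have h2 : b n ≠ a i := fun hc => hab i n hc.symm
        have h3 : b n ≠ a j := fun hc => hab j n hc.symm
        rw [Set.mem_Icc] at h1
        exact aux_lt h1.1 h1.2 h2 h3
      exact absurd (aux_core Mμ hMμ Mν hMν A' B' Uu hUu Vv hVv hrank (a i) (a j) hxy
        (hμa0 i) (hμa' i) (hμa0 j) (hμa' j)
        (Or.inr (aux_ae_of_forall hν hno))) not_false
  · rintro x ⟨i, rfl⟩ y ⟨j, rfl⟩ hxy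
    constructor
    · by_contra hne
      rw [Set.not_nonempty_iff_eq_empty] at hne
      have hno : ∀ n, (b j - b i)/2 < |a n - (b i + b j)/2| := by
        intro n
        have h1 : a n ∉ Ioo (b i) (b j) :=
          fun hc => (Set.eq_empty_iff_forall_notMem.1 hne (a n)) ⟨hc, ⟨n, rfl⟩⟩
        have h2 : a n ≠ b i := hab n i
        have h3 : a n ≠ b j := hab n j
        exact aux_gt (by rwa [Set.mem_Ioo] at h1) h2 h3
      exact absurd (aux_core Mν hMν Mμ hMμ B' A' Vv hVv Uu hUu hrank' (b i) (b j) hxy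
        (hνb0 i) (hνb' i) (hνb0 j) (hνb' j)
        (Or.inl (aux_ae_of_forall hμ hno))) not_false
    · by_contra hne
      rw [Set.not_nonempty_iff_eq_empty] at hne
      have hno : ∀ n, |a n - (b i + b j)/2| < (b j - b i)/2 := by
        intro n
        have h1 : a n ∈ Icc (b i) (b j) := by
          by_contra hc
          exact (Set.eq_empty_iff_forall_notMem.1 hne (a n)) ⟨hc, ⟨n, rfl⟩⟩
        have h2 : a n ≠ b i := hab n i
        have h3 : a n ≠ b j := hab n j
        rw [Set.mem_Icc] at h1
        exact aux_lt h1.1 h1.2 h2 h3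
      exact absurd (aux_core Mν hMν Mμ hMμ B' A' Vv hVv Uu hUu hrank' (b i) (b j) hxy
        (hνb0 i) (hνb' i) (hνb0 j) (hνb' j)
        (Or.inr (aux_ae_of_forall hμ hno))) not_false
end
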